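/- arXiv:2011.13639 — 3 statements merged into one kernel-verified Lean document; each statement's English description precedes it below -/
import Mathlib

section
/- Let V be a rank-one valuation domain whose value group Γ_v is uncountable. Then 𝒱 (with the Zariski topology) is not metrizable, and Zar(K(X)|V) endowed with the constructible topology is not metrizable. -/
open Filter Topology TopologicalSpace Set Polynomial

noncomputable section

namespace PaperPCZar

variable {K : Type*} [Field K]

/-- `expNeg γ = e^{-γ}` for `γ ∈ ℝ ∪ {∞}`, with `e^{-∞} = 0`. -/
def expNeg (γ : WithTop ℝ) : ℝ := WithTop.recTopCoe 0 (fun r => Real.exp (-r)) γ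

/-- `v` is a rank-one (i.e. nontrivial, real-valued) valuation. -/
def IsRankOne (v : AddValuation K (WithTop ℝ)) : Prop := ∃ x : K, v x ≠ 0 ∧ v x ≠ ⊤

/-- The value group `Γ_v` of `v`, as a subset of `ℝ`. -/
def valueGroup (v : AddValuation K (WithTop ℝ)) : Set ℝ := {r : ℝ | ∃ x : K, v x = (r : WithTop ℝ)}

/-- `ℚΓ_v = {q·γ : q ∈ ℚ, γ ∈ Γ_v}`, the divisible hull of the value group inside `ℝ`. -/
def QGamma (v : AddValuation K (WithTop ℝ)) : Set ℝ :=
  {r : ℝ | ∃ (q : ℚ) (γ : ℝ), γ ∈ valueGroup v ∧ r = q * γ}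

/-- Order convergence of a sequence in `ℝ ∪ {∞}` to `γ`. -/
def OrdLim (f : ℕ → WithTop ℝ) (γ : WithTop ℝ) : Prop :=
  (∀ a : WithTop ℝ, a < γ → ∀ᶠ n in atTop, a < f n) ∧
  (∀ b : WithTop ℝ, γ < b → ∀ᶠ n in atTop, f n < b)

/-- `s` is a pseudo-convergent sequence with respect to `v`. -/
def IsPC (v : AddValuation K (WithTop ℝ)) (s : ℕ → K) : Prop :=
  ∀ n, v (s (n + 1) - s n) < v (s (n + 2) - s (n + 1))

/-- `s` is a pseudo-divergent sequence with respect to `v`. -/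
def IsPD (v : AddValuation K (WithTop ℝ)) (s : ℕ → K) : Prop :=
  ∀ n, v (s (n + 1) - s (n + 2)) < v (s n - s (n + 1))

/-- `s` is a pseudo-stationary sequence with respect to `v`. -/
def IsPS (v : AddValuation K (WithTop ℝ)) (s : ℕ → K) : Prop :=
  ∀ n m n' m' : ℕ, n ≠ m → n' ≠ m' → v (s n - s m) = v (s n' - s m')

/-- `δ ∈ ℝ ∪ {∞}` is the breadth of the sequence `s`, i.e. `δ = lim_n v(s_{n+1} - s_n)`. -/
def IsBreadth (v : AddValuation K (WithTop ℝ)) (s : ℕ → K) (δ : WithTop ℝ) : Prop :=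
  OrdLim (fun n => v (s (n + 1) - s n)) δ

/-- `α ∈ K` is a pseudo-limit of the pseudo-convergent sequence `s`. -/
def IsPCLimit (v : AddValuation K (WithTop ℝ)) (s : ℕ → K) (α : K) : Prop :=
  ∀ n, v (α - s n) < v (α - s (n + 1))

/-- `α ∈ K` is a pseudo-limit of the pseudo-divergent sequence `s`. -/
def IsPDLimit (v : AddValuation K (WithTop ℝ)) (s : ℕ → K) (α : K) : Prop :=
  ∀ n, v (α - s (n + 1)) < v (α - s n)

/-- `β ∈ K̄` is a pseudo-limit of `s ⊆ K` with respect to an extension `u` of `v`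
to the algebraic closure of `K`. -/
def IsPCLimitAC (u : AddValuation (AlgebraicClosure K) (WithTop ℝ)) (s : ℕ → K)
    (β : AlgebraicClosure K) : Prop :=
  ∀ n, u (β - algebraMap K (AlgebraicClosure K) (s n)) <
    u (β - algebraMap K (AlgebraicClosure K) (s (n + 1)))

/-- `s` is of transcendental type: for every polynomial `f`, `v(f(s_n))` eventually
stabilizes. -/
def IsTranscendentalType (v : AddValuation K (WithTop ℝ)) (s : ℕ → K) : Prop :=
  ∀ f : Polynomial K, ∃ N, ∀ n ≥ N, v (f.eval (s n)) = v (f.eval (s N))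

/-- The ultrametric distance `d(x,y) = e^{-v(x-y)}` on `K`. -/
def dK (v : AddValuation K (WithTop ℝ)) (x y : K) : ℝ := expNeg (v (x - y))

/-- The set `V_E = {φ ∈ K(X) : φ(s_n) ∈ V for all but finitely many n}`. -/
def VESet (v : AddValuation K (WithTop ℝ)) (s : ℕ → K) : Set (RatFunc K) :=
  {φ : RatFunc K | ∀ᶠ n in atTop, 0 ≤ v (RatFunc.eval (RingHom.id K) (s n) φ)}

/-- `Zar(K(X)|V)`: the valuation subrings of `K(X)` containing (the image of) `V`. -/
def ZarSet (v : AddValuation K (WithTop ℝ)) : Set (ValuationSubring (RatFunc K)) :=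
  {W | ∀ x : K, 0 ≤ v x → algebraMap K (RatFunc K) x ∈ W}

/-- `𝒱`: valuation subrings of `K(X)` of the form `V_E`, `E` pseudo-convergent. -/
def VV (v : AddValuation K (WithTop ℝ)) : Set (ValuationSubring (RatFunc K)) :=
  {W | ∃ s : ℕ → K, IsPC v s ∧ (W : Set (RatFunc K)) = VESet v s}

/-- `𝒱(•,δ)`: those `V_E` with `E` pseudo-convergent of breadth `δ`. -/
def VVδ (v : AddValuation K (WithTop ℝ)) (δ : WithTop ℝ) : Set (ValuationSubring (RatFunc K)) :=
  {W | ∃ s : ℕ → K, IsPC v s ∧ IsBreadth v s δ ∧ (W : Set (RatFunc K)) = VESet v s}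

/-- `𝒱_K(•,δ)`: those `V_E` with `E` pseudo-convergent of breadth `δ` having a
pseudo-limit in `K`. -/
def VVKδ (v : AddValuation K (WithTop ℝ)) (δ : WithTop ℝ) : Set (ValuationSubring (RatFunc K)) :=
  {W | ∃ s : ℕ → K, IsPC v s ∧ IsBreadth v s δ ∧ (∃ α : K, IsPCLimit v s α) ∧
    (W : Set (RatFunc K)) = VESet v s}

/-- `𝒱(β,•)`: those `V_E` with `E` pseudo-convergent having `β ∈ K̄` as a pseudo-limit
with respect to `u`. -/
def VVβ (v : AddValuation K (WithTop ℝ)) (u : AddValuation (AlgebraicClosure K) (WithTop ℝ))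
    (β : AlgebraicClosure K) : Set (ValuationSubring (RatFunc K)) :=
  {W | ∃ s : ℕ → K, IsPC v s ∧ IsPCLimitAC u s β ∧ (W : Set (RatFunc K)) = VESet v s}

/-- `𝒱(β,•)` for a pseudo-limit `β ∈ K`. -/
def VVβK (v : AddValuation K (WithTop ℝ)) (β : K) : Set (ValuationSubring (RatFunc K)) :=
  {W | ∃ s : ℕ → K, IsPC v s ∧ IsPCLimit v s β ∧ (W : Set (RatFunc K)) = VESet v s}

/-- `𝒱_div`: those `V_E` with `E` pseudo-divergent. -/
def VVdiv (v : AddValuation K (WithTop ℝ)) : Set (ValuationSubring (RatFunc K)) :=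
  {W | ∃ s : ℕ → K, IsPD v s ∧ (W : Set (RatFunc K)) = VESet v s}

/-- `𝒱_div(•,δ)`: those `V_E` with `E` pseudo-divergent of breadth `δ`. -/
def VVdivδ (v : AddValuation K (WithTop ℝ)) (δ : WithTop ℝ) : Set (ValuationSubring (RatFunc K)) :=
  {W | ∃ s : ℕ → K, IsPD v s ∧ IsBreadth v s δ ∧ (W : Set (RatFunc K)) = VESet v s}

/-- `𝒱_div(β,•)`: those `V_E` with `E` pseudo-divergent having `β ∈ K` as a pseudo-limit. -/
def VVdivβ (v : AddValuation K (WithTop ℝ)) (β : K) : Set (ValuationSubring (RatFunc K)) :=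
  {W | ∃ s : ℕ → K, IsPD v s ∧ IsPDLimit v s β ∧ (W : Set (RatFunc K)) = VESet v s}

/-- `𝒱_stat(•,δ)`: those `V_E` with `E` pseudo-stationary of breadth `δ`. -/
def VVstatδ (v : AddValuation K (WithTop ℝ)) (δ : WithTop ℝ) :
    Set (ValuationSubring (RatFunc K)) :=
  {W | ∃ s : ℕ → K, (∀ n m : ℕ, n ≠ m → v (s n - s m) = δ) ∧
    (W : Set (RatFunc K)) = VESet v s}

/-- `𝒱_stat(β,•)`: those `V_E` with `E` pseudo-stationary having `β` as a pseudo-limit. -/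
def VVstatβ (v : AddValuation K (WithTop ℝ)) (β : K) : Set (ValuationSubring (RatFunc K)) :=
  {W | ∃ (s : ℕ → K) (δ : WithTop ℝ), (∀ n m : ℕ, n ≠ m → v (s n - s m) = δ) ∧
    (∀ n, δ ≤ v (β - s n)) ∧ (W : Set (RatFunc K)) = VESet v s}

/-- The Zariski topology on the valuation subrings of a field `L`, generated by the
sets `B(φ) = {W : φ ∈ W}`. -/
def zarTop (L : Type*) [Field L] : TopologicalSpace (ValuationSubring L) :=
  generateFrom {U | ∃ φ : L, U = {W : ValuationSubring L | φ ∈ W}}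

/-- The constructible topology on the valuation subrings of a field `L`: the coarsest
topology in which all finite intersections `B(φ₁) ∩ ⋯ ∩ B(φ_k)` are open and closed. -/
def consTop (L : Type*) [Field L] : TopologicalSpace (ValuationSubring L) :=
  generateFrom {U | ∃ T : Finset L, U = {W : ValuationSubring L | ∀ φ ∈ T, φ ∈ W} ∨
    U = {W : ValuationSubring L | ∀ φ ∈ T, φ ∈ W}ᶜ}

/-- The subspace Zariski topology on a set of valuation subrings. -/
def zarSub {L : Type*} [Field L] (S : Set (ValuationSubring L)) : TopologicalSpace ↥S :=
  (zarTop L).induced Subtype.val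

/-- The subspace constructible topology on a set of valuation subrings. -/
def consSub {L : Type*} [Field L] (S : Set (ValuationSubring L)) : TopologicalSpace ↥S :=
  (consTop L).induced Subtype.val

/-- `d` is a metric on `X` inducing the topology `t`. -/
def MetrizedBy {X : Type*} (t : TopologicalSpace X) (d : X → X → ℝ) : Prop :=
  (∀ x y, d x y = d y x) ∧ (∀ x y, d x y = 0 ↔ x = y) ∧
  (∀ x y z, d x z ≤ d x y + d y z) ∧
  t = generateFrom {U : Set X | ∃ (x : X) (ε : ℝ), 0 < ε ∧ U = {y | d x y < ε}}

/-- The topology `t` is metrizable. -/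
def IsMetrizable {X : Type*} (t : TopologicalSpace X) : Prop := ∃ d, MetrizedBy t d

/-- The topology `t` is induced by an ultrametric. -/
def IsUltrametrizable {X : Type*} (t : TopologicalSpace X) : Prop :=
  ∃ d, MetrizedBy t d ∧ ∀ x y z, d x z ≤ max (d x y) (d y z)

/-- `dd` computes the distance `d_δ` on `𝒱(•,δ)`:
`d_δ(V_E, V_F) = lim_n max (d(s_n,t_n) - e^{-δ}) 0`. -/
def IsDistδ (v : AddValuation K (WithTop ℝ)) (δ : WithTop ℝ)
    (dd : ValuationSubring (RatFunc K) → ValuationSubring (RatFunc K) → ℝ) : Prop :=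
  ∀ (W W' : ValuationSubring (RatFunc K)) (s t : ℕ → K),
    IsPC v s → IsBreadth v s δ → (W : Set (RatFunc K)) = VESet v s →
    IsPC v t → IsBreadth v t δ → (W' : Set (RatFunc K)) = VESet v t →
    Tendsto (fun n => max (dK v (s n) (t n) - expNeg δ) 0) atTop (𝓝 (dd W W'))

/-- The `Λ`-upper limit topology on the interval `(-∞, b] ⊆ ℝ ∪ {∞}`, generated by the
half-open intervals `(α, λ]` with `λ ∈ Λ ∪ {∞}`. -/
def upperTopWT (b : WithTop ℝ) (Λ : Set ℝ) : TopologicalSpace {γ : WithTop ℝ // γ ≤ b} :=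
  generateFrom {U | ∃ α lam : WithTop ℝ, α ≤ b ∧
    (lam = ⊤ ∨ ∃ r ∈ Λ, lam = (r : WithTop ℝ)) ∧
    U = {γ : {γ : WithTop ℝ // γ ≤ b} | α < (γ : WithTop ℝ) ∧ (γ : WithTop ℝ) ≤ lam}}

/-- The `Λ`-upper limit topology on `(-∞, +∞] = ℝ ∪ {∞}`. -/
def upperTopAll (Λ : Set ℝ) : TopologicalSpace (WithTop ℝ) :=
  generateFrom {U | ∃ α lam : WithTop ℝ,
    (lam = ⊤ ∨ ∃ r ∈ Λ, lam = (r : WithTop ℝ)) ∧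
    U = {γ : WithTop ℝ | α < γ ∧ γ ≤ lam}}

/-- The `Λ`-upper limit topology on an interval `(a, b]` of `ℝ ∪ {±∞}`. -/
def upperTopE (a b : EReal) (Λ : Set ℝ) : TopologicalSpace {x : EReal // a < x ∧ x ≤ b} :=
  generateFrom {U | ∃ α lam : EReal, (a < α ∧ α ≤ b) ∧
    (lam = ⊤ ∨ ∃ r ∈ Λ, lam = (r : EReal)) ∧
    U = {x : {x : EReal // a < x ∧ x ≤ b} | α < (x : EReal) ∧ (x : EReal) ≤ lam}}


/-- `𝒲`: the valuation domains of the valuations `w_E : φ ↦ lim_n v(φ(s_n))`, as `E`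
ranges over the pseudo-convergent sequences for which `w_E` is a valuation. -/
def WW (v : AddValuation K (WithTop ℝ)) : Set (ValuationSubring (RatFunc K)) :=
  {W | ∃ (s : ℕ → K) (w : AddValuation (RatFunc K) (WithTop ℝ)), IsPC v s ∧
    (∀ φ : RatFunc K, OrdLim (fun n => v (RatFunc.eval (RingHom.id K) (s n) φ)) (w φ)) ∧
    (W : Set (RatFunc K)) = {φ : RatFunc K | 0 ≤ w φ}}

/-! ### Auxiliary development for Statement 13 -/

section Statement13Aux

variable (v : AddValuation K (WithTop ℝ))

lemma vne_top {x : K} (hx : x ≠ 0) : v x ≠ ⊤ := (AddValuation.ne_top_iff v).2 hx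

lemma ne_zero_of_v_coe {x : K} {γ : ℝ} (h : v x = (γ : WithTop ℝ)) : x ≠ 0 := by
  intro h0
  rw [h0, AddValuation.map_zero] at h
  exact WithTop.coe_ne_top h.symm

lemma coe_nsmul_wt (n : ℕ) (b : ℝ) : (n • ((b:ℝ) : WithTop ℝ)) = (((n*b : ℝ)) : WithTop ℝ) := by
  induction n with
  | zero => simp
  | succ k ih =>
    rw [succ_nsmul, ih, ← WithTop.coe_add, WithTop.coe_inj]
    push_cast
    ring

/-- cancel a real on the left in `WithTop ℝ`. -/
lemma wt_cancel {a c : ℝ} {t : WithTop ℝ} (h : (a : WithTop ℝ) + t = (c : WithTop ℝ)) :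
    t = ((c - a : ℝ) : WithTop ℝ) := by
  cases t with
  | top => simp at h
  | coe b =>
    rw [← WithTop.coe_add, WithTop.coe_inj] at h
    rw [WithTop.coe_inj]
    linarith

lemma vg_zero : (0:ℝ) ∈ valueGroup v := ⟨1, by rw [AddValuation.map_one]; norm_cast⟩

lemma vg_add {a b : ℝ} (ha : a ∈ valueGroup v) (hb : b ∈ valueGroup v) :
    a + b ∈ valueGroup v := by
  obtain ⟨x, hx⟩ := ha; obtain ⟨y, hy⟩ := hb
  exact ⟨x * y, by rw [AddValuation.map_mul, hx, hy, ← WithTop.coe_add]⟩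

lemma vg_neg {a : ℝ} (ha : a ∈ valueGroup v) : -a ∈ valueGroup v := by
  obtain ⟨x, hx⟩ := ha
  exact ⟨x⁻¹, by rw [AddValuation.map_inv, hx, ← WithTop.LinearOrderedAddCommGroup.coe_neg]⟩

def vgGroup : AddSubgroup ℝ where
  carrier := valueGroup v
  zero_mem' := vg_zero v
  add_mem' := vg_add v
  neg_mem' := vg_neg v

lemma dense_valueGroup (hΓ : ¬ (valueGroup v).Countable) : Dense (valueGroup v) := by
  rcases (vgGroup v).dense_or_cyclic with h | ⟨a, ha⟩
  · exact h
  · exfalso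
    apply hΓ
    have hsub : (valueGroup v) ⊆ Set.range (fun n : ℤ => n • a) := by
      intro x hx
      have : x ∈ AddSubgroup.closure {a} := by
        rw [← ha]; exact hx
      rcases (AddSubgroup.mem_closure_singleton).1 this with ⟨n, hn⟩
      exact ⟨n, hn⟩
    exact (Set.countable_range _).mono hsub

/-- A "good sequence" converging to `δ` from below, with values in the value group. -/
structure GoodSeq (v : AddValuation K (WithTop ℝ)) (δ : ℝ) where
  s : ℕ → K
  γ : ℕ → ℝ
  hv : ∀ n, v (s n) = ((γ n : ℝ) : WithTop ℝ)
  mono : StrictMono γ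
  lt : ∀ n, γ n < δ
  tend : ∀ β : ℝ, β < δ → ∃ N, ∀ n ≥ N, β < γ n

lemma goodSeq_exists (hd : Dense (valueGroup v)) (δ : ℝ) : Nonempty (GoodSeq v δ) := by
  classical
  let T := {x : ℝ // x ∈ valueGroup v ∧ x < δ}
  have H : ∀ (n : ℕ) (a : T), ∃ b : T, a.1 < b.1 ∧ δ - 1/(n+1) < b.1 := by
    intro n a
    have hlt : max a.1 (δ - 1/(n+1)) < δ := by
      rcases a.2 with ⟨_, h2⟩
      have : (0:ℝ) < 1/(n+1) := by positivity
      apply max_lt h2 (by linarith)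
    obtain ⟨g, hg, h1, h2⟩ := hd.exists_between hlt
    exact ⟨⟨g, hg, h2⟩, lt_of_le_of_lt (le_max_left _ _) h1,
      lt_of_le_of_lt (le_max_right _ _) h1⟩
  choose F hF1 hF2 using H
  have H0 : ∃ a : T, δ - 1 < a.1 := by
    obtain ⟨g, hg, h1, h2⟩ := hd.exists_between (show δ - 1 < δ by linarith)
    exact ⟨⟨g, hg, h2⟩, h1⟩
  obtain ⟨a0, ha0⟩ := H0
  let G : ℕ → T := fun n => Nat.rec a0 (fun k x => F (k+1) x) n
  have hGsucc : ∀ n, G (n+1) = F (n+1) (G n) := fun n => rfl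
  have hmono : ∀ n, (G n).1 < (G (n+1)).1 := by
    intro n; rw [hGsucc]; exact hF1 (n+1) (G n)
  have hbound : ∀ n, δ - 1/(n+1) < (G n).1 := by
    intro n
    cases n with
    | zero => simpa using (show δ - 1 < (G 0).1 from ha0)
    | succ k => rw [hGsucc]; exact hF2 (k+1) (G k)
  have hel : ∀ n, ∃ x : K, v x = (((G n).1 : ℝ) : WithTop ℝ) := fun n => (G n).2.1
  choose s hs using hel
  refine ⟨⟨s, fun n => (G n).1, hs, strictMono_nat_of_lt_succ hmono, fun n => (G n).2.2, ?_⟩⟩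
  intro β hβ
  obtain ⟨N, hN⟩ := exists_nat_one_div_lt (show (0:ℝ) < δ - β by linarith)
  refine ⟨N, fun n hn => ?_⟩
  have h1 : δ - 1/(n+1) < (G n).1 := hbound n
  have h2 : (1:ℝ)/(n+1) ≤ 1/(N+1) := by
    apply one_div_le_one_div_of_le (by positivity)
    have : (N:ℝ) ≤ n := Nat.cast_le.2 hn
    linarith
  linarith

lemma goodSeq_isPC {δ : ℝ} (g : GoodSeq v δ) : IsPC v g.s := by
  intro n
  have h1 : v (g.s (n+1) - g.s n) = ((g.γ n : ℝ) : WithTop ℝ) := by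
    rw [AddValuation.map_sub_eq_of_lt_right]
    · exact g.hv n
    · rw [g.hv n, g.hv (n+1)]
      exact_mod_cast g.mono (Nat.lt_succ_self n)
  have h2 : v (g.s (n+2) - g.s (n+1)) = ((g.γ (n+1) : ℝ) : WithTop ℝ) := by
    rw [AddValuation.map_sub_eq_of_lt_right]
    · exact g.hv (n+1)
    · rw [g.hv (n+1), g.hv (n+2)]
      exact_mod_cast g.mono (Nat.lt_succ_self (n+1))
  rw [h1, h2]
  exact_mod_cast g.mono (Nat.lt_succ_self n)

/-- Key lemma: near `δ⁻`, the valuation of `f.eval x` is a linear function of `v x`. -/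
lemma poly_linear (δ : ℝ) (f : K[X]) (hf : f ≠ 0) :
    ∃ (A : ℝ) (B : ℕ) (β : ℝ), β < δ ∧ ∀ (x : K) (γ : ℝ), v x = (γ : WithTop ℝ) →
      β < γ → γ < δ → v (f.eval x) = ((A + B * γ : ℝ) : WithTop ℝ) := by
  classical
  set T := f.support with hT
  have hTne : T.Nonempty := Finset.nonempty_iff_ne_empty.2 (by
    rw [hT]; exact fun h => hf (Polynomial.support_eq_empty.1 h))
  have hc : ∀ i : ℕ, ∃ ci : ℝ, f.coeff i ≠ 0 → v (f.coeff i) = ((ci : ℝ) : WithTop ℝ) := by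
    intro i
    by_cases h : f.coeff i = 0
    · exact ⟨0, fun h' => absurd h h'⟩
    · have := (AddValuation.ne_top_iff v).2 h
      rcases WithTop.ne_top_iff_exists.1 this with ⟨ci, hci⟩
      exact ⟨ci, fun _ => hci.symm⟩
  choose c hcspec using hc
  have hTne' : (T.image (fun i => c i + i * δ)).Nonempty := hTne.image _
  set m := (T.image (fun i => c i + i * δ)).min' hTne' with hm
  set M := T.filter (fun i => c i + i * δ = m) with hM
  have hMne : M.Nonempty := by
    have := (T.image (fun i => c i + i * δ)).min'_mem hTne'
    rw [← hm, Finset.mem_image] at this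
    obtain ⟨i, hi, hie⟩ := this
    exact ⟨i, by rw [hM, Finset.mem_filter]; exact ⟨hi, hie⟩⟩
  set i₀ := M.max' hMne with hi₀
  have hi₀M : i₀ ∈ M := M.max'_mem hMne
  have hi₀T : i₀ ∈ T := (Finset.mem_filter.1 hi₀M).1
  have hi₀m : c i₀ + i₀ * δ = m := (Finset.mem_filter.1 hi₀M).2
  have hmle : ∀ i ∈ T, m ≤ c i + i * δ := fun i hi =>
    Finset.min'_le _ _ (Finset.mem_image_of_mem _ hi)
  have hmax : ∀ i ∈ T, c i + i * δ = m → i ≤ i₀ := fun i hi he =>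
    M.le_max' i (by rw [hM, Finset.mem_filter]; exact ⟨hi, he⟩)
  have Hβ : ∀ i : ℕ, ∃ βi : ℝ, βi < δ ∧ ∀ γ : ℝ, βi < γ → γ < δ → i ∈ T → i ≠ i₀ →
      c i₀ + i₀ * γ < c i + i * γ := by
    intro i
    by_cases hiT : i ∈ T ∧ i ≠ i₀
    · obtain ⟨h1, h2⟩ := hiT
      rcases eq_or_lt_of_le (hmle i h1) with heq | hlt
      · have hii : i < i₀ := lt_of_le_of_ne (hmax i h1 heq.symm) h2
        refine ⟨δ - 1, by linarith, fun γ hγ1 hγ2 _ _ => ?_⟩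
        have hii' : (i:ℝ) < (i₀:ℝ) := by exact_mod_cast hii
        nlinarith [heq, hi₀m]
      · set e := c i + i * δ - m with he
        have hepos : 0 < e := by rw [he]; linarith
        set u := |(i:ℝ) - (i₀:ℝ)| with hu
        have hupos : (0:ℝ) < u + 1 := by positivity
        refine ⟨δ - e / (u + 1), by
          have : 0 < e / (u+1) := by positivity
          linarith, fun γ hγ1 hγ2 _ _ => ?_⟩
        have habs : ((i:ℝ) - i₀) * (γ - δ) ≥ -(u * (δ - γ)) := by
          have h1 : ((i:ℝ) - i₀) * (γ - δ) ≥ -|((i:ℝ) - i₀) * (γ - δ)| := neg_abs_le _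
          rw [abs_mul, ← hu] at h1
          have h2 : |γ - δ| = δ - γ := by rw [abs_of_nonpos (by linarith)]; ring
          rw [h2] at h1
          exact h1
        have hsm : u * (δ - γ) ≤ (u+1) * (δ - γ) := by nlinarith [abs_nonneg ((i:ℝ) - i₀)]
        have hlt2 : (u+1) * (δ - γ) < (u+1) * (e/(u+1)) := by
          apply mul_lt_mul_of_pos_left _ hupos
          linarith
        rw [mul_div_cancel₀ _ (ne_of_gt hupos)] at hlt2
        nlinarith [hi₀m]
    · exact ⟨δ - 1, by linarith, fun γ _ _ hT' hne => absurd ⟨hT', hne⟩ hiT⟩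
  choose bf hbf1 hbf2 using Hβ
  refine ⟨c i₀, i₀, T.sup' hTne bf, (Finset.sup'_lt_iff hTne).2 fun i _ => hbf1 i, ?_⟩
  intro x γ hx hβγ hγδ
  set F : ℕ → K := fun i => f.coeff i * x ^ i with hF
  have hvF : ∀ i ∈ T, v (F i) = ((c i + i * γ : ℝ) : WithTop ℝ) := by
    intro i hi
    have hco : f.coeff i ≠ 0 := Polynomial.mem_support_iff.1 hi
    rw [hF]
    simp only
    rw [AddValuation.map_mul, AddValuation.map_pow, hx, coe_nsmul_wt, hcspec i hco,
      ← WithTop.coe_add]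
  have hmain : ∀ i ∈ T.erase i₀, v (F i₀) < v (F i) := by
    intro i hi
    have hiT : i ∈ T := Finset.mem_of_mem_erase hi
    have hine : i ≠ i₀ := Finset.ne_of_mem_erase hi
    rw [hvF i₀ hi₀T, hvF i hiT, WithTop.coe_lt_coe]
    exact hbf2 i γ (lt_of_le_of_lt (Finset.le_sup' bf hiT) hβγ) hγδ hiT hine
  have heval : f.eval x = F i₀ + ∑ i ∈ T.erase i₀, F i := by
    rw [Finset.add_sum_erase T F hi₀T]
    rw [Polynomial.eval_eq_sum, Polynomial.sum_def]
  rw [heval]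
  rw [AddValuation.map_add_eq_of_lt_left]
  · exact hvF i₀ hi₀T
  · apply AddValuation.map_lt_sum
    · rw [hvF i₀ hi₀T]; exact WithTop.coe_ne_top
    · exact hmain

lemma eval_id_eq (φ : RatFunc K) (x : K) :
    RatFunc.eval (RingHom.id K) x φ = φ.num.eval x / φ.denom.eval x := rfl

lemma ratfunc_linear (δ : ℝ) (φ : RatFunc K) (hφ : φ ≠ 0) :
    ∃ (A B β : ℝ), β < δ ∧ ∀ (x : K) (γ : ℝ), v x = (γ : WithTop ℝ) →
      β < γ → γ < δ →
      v (RatFunc.eval (RingHom.id K) x φ) = ((A + B * γ : ℝ) : WithTop ℝ) := by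
  obtain ⟨A1, B1, β1, hβ1, h1⟩ := poly_linear v δ φ.num (RatFunc.num_ne_zero hφ)
  obtain ⟨A2, B2, β2, hβ2, h2⟩ := poly_linear v δ φ.denom (RatFunc.denom_ne_zero φ)
  refine ⟨A1 - A2, (B1:ℝ) - B2, max β1 β2, max_lt hβ1 hβ2, ?_⟩
  intro x γ hx hβγ hγδ
  rw [eval_id_eq, AddValuation.map_div,
    h1 x γ hx (lt_of_le_of_lt (le_max_left _ _) hβγ) hγδ,
    h2 x γ hx (lt_of_le_of_lt (le_max_right _ _) hβγ) hγδ,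
    ← WithTop.LinearOrderedAddCommGroup.coe_sub, WithTop.coe_inj]
  ring

end Statement13Aux


section Statement13Aux2

variable (v : AddValuation K (WithTop ℝ)) {δ : ℝ}

lemma mem_VESet_iff (s : ℕ → K) (φ : RatFunc K) :
    φ ∈ VESet v s ↔ ∀ᶠ n in atTop, 0 ≤ v (RatFunc.eval (RingHom.id K) (s n) φ) := Iff.rfl

lemma zero_mem_VESet (s : ℕ → K) : (0 : RatFunc K) ∈ VESet v s := by
  refine Filter.Eventually.of_forall (fun n => ?_)
  rw [RatFunc.eval_zero, AddValuation.map_zero]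
  exact le_top

lemma goodSeq_ev_gt (g : GoodSeq v δ) {β : ℝ} (hβ : β < δ) : ∀ᶠ n in atTop, β < g.γ n := by
  obtain ⟨N, hN⟩ := g.tend β hβ
  exact eventually_atTop.2 ⟨N, hN⟩

lemma goodSeq_ratfunc_ev (g : GoodSeq v δ) {φ : RatFunc K} (hφ : φ ≠ 0) :
    ∃ (A B β : ℝ), β < δ ∧
      (∀ (x : K) (γ : ℝ), v x = (γ : WithTop ℝ) → β < γ → γ < δ →
        v (RatFunc.eval (RingHom.id K) x φ) = ((A + B * γ : ℝ) : WithTop ℝ)) ∧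
      ∀ᶠ n in atTop,
        v (RatFunc.eval (RingHom.id K) (g.s n) φ) = ((A + B * g.γ n : ℝ) : WithTop ℝ) := by
  obtain ⟨A, B, β, hβ, h⟩ := ratfunc_linear v δ φ hφ
  refine ⟨A, B, β, hβ, h, ?_⟩
  filter_upwards [goodSeq_ev_gt v g hβ] with n hn
  exact h (g.s n) (g.γ n) (g.hv n) hn (g.lt n)

lemma goodSeq_poly_ne (g : GoodSeq v δ) {p : K[X]} (hp : p ≠ 0) :
    ∀ᶠ n in atTop, p.eval (g.s n) ≠ 0 := by
  obtain ⟨A, B, β, hβ, h⟩ := poly_linear v δ p hp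
  filter_upwards [goodSeq_ev_gt v g hβ] with n hn h0
  have hh := h (g.s n) (g.γ n) (g.hv n) hn (g.lt n)
  rw [h0, AddValuation.map_zero] at hh
  exact WithTop.coe_ne_top hh.symm

lemma goodSeq_denom_ne (g : GoodSeq v δ) (φ : RatFunc K) :
    ∀ᶠ n in atTop, Polynomial.eval₂ (RingHom.id K) (g.s n) φ.denom ≠ 0 :=
  goodSeq_poly_ne v g (RatFunc.denom_ne_zero φ)

lemma linear_nonneg_between {A B a b x : ℝ} (ha : 0 ≤ A + B*a) (hb : 0 ≤ A + B*b)
    (h1 : a ≤ x) (h2 : x ≤ b) : 0 ≤ A + B*x := by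
  rcases le_or_gt 0 B with hB | hB
  · nlinarith
  · nlinarith

/-- membership in `VESet` propagates to a left neighbourhood of `δ`. -/
lemma mem_propagate (g : GoodSeq v δ) (φ : RatFunc K) (h : φ ∈ VESet v g.s) :
    ∃ β < δ, ∀ δ' : ℝ, β < δ' → δ' ≤ δ → ∀ g' : GoodSeq v δ', φ ∈ VESet v g'.s := by
  by_cases hφ : φ = 0
  · subst hφ
    exact ⟨δ - 1, by linarith, fun δ' _ _ g' => zero_mem_VESet v g'.s⟩
  obtain ⟨A, B, β, hβ, hfor, hev⟩ := goodSeq_ratfunc_ev v g hφ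
  have h' : ∀ᶠ n in atTop, (β < g.γ n ∧ 0 ≤ A + B * g.γ n) := by
    filter_upwards [goodSeq_ev_gt v g hβ, hev, h] with n h1 h2 h3
    refine ⟨h1, ?_⟩
    rw [h2] at h3
    exact_mod_cast h3
  obtain ⟨N, hN⟩ := eventually_atTop.1 h'
  have key : ∀ x : ℝ, g.γ N ≤ x → x < δ → 0 ≤ A + B * x := by
    intro x hx1 hx2
    obtain ⟨N', hN'⟩ := g.tend x hx2
    exact linear_nonneg_between (hN N le_rfl).2 (hN (max N N') (le_max_left _ _)).2 hx1
      (le_of_lt (hN' (max N N') (le_max_right _ _)))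
  refine ⟨max β (g.γ N), max_lt hβ (g.lt N), fun δ' h1 h2 g' => ?_⟩
  filter_upwards [goodSeq_ev_gt v g' h1] with n hn
  have hβn : β < g'.γ n := lt_of_le_of_lt (le_max_left _ _) hn
  have hγN : g.γ N ≤ g'.γ n := le_of_lt (lt_of_le_of_lt (le_max_right _ _) hn)
  have hlt : g'.γ n < δ := lt_of_lt_of_le (g'.lt n) h2
  show 0 ≤ v _
  rw [hfor (g'.s n) (g'.γ n) (g'.hv n) hβn hlt]
  exact_mod_cast key _ hγN hlt

lemma eventually_neg_linear (g : GoodSeq v δ) {φ : RatFunc K} {A B : ℝ}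
    (hev : ∀ᶠ n in atTop,
      v (RatFunc.eval (RingHom.id K) (g.s n) φ) = ((A + B * g.γ n : ℝ) : WithTop ℝ))
    (h : ¬ ∀ᶠ n in atTop, 0 ≤ v (RatFunc.eval (RingHom.id K) (g.s n) φ)) :
    ∃ N₁, ∀ n ≥ N₁, A + B * g.γ n < 0 := by
  have hfreq := Filter.not_eventually.1 h
  obtain ⟨N₀, hN₀⟩ := eventually_atTop.1 hev
  have hnegpt : ∀ n : ℕ, ∃ m, n ≤ m ∧ N₀ ≤ m ∧ A + B * g.γ m < 0 := by
    intro n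
    obtain ⟨m, hneg, hm⟩ := (hfreq.and_eventually (eventually_ge_atTop (max n N₀))).exists
    have hm1 : n ≤ m := le_trans (le_max_left _ _) hm
    have hm2 : N₀ ≤ m := le_trans (le_max_right _ _) hm
    refine ⟨m, hm1, hm2, ?_⟩
    rw [hN₀ m hm2] at hneg
    have := not_le.1 hneg
    exact_mod_cast this
  rcases le_or_gt 0 B with hB | hB
  · refine ⟨N₀, fun n hn => ?_⟩
    obtain ⟨m, hm1, _, hneg⟩ := hnegpt n
    have hmon : g.γ n ≤ g.γ m := g.mono.monotone hm1
    nlinarith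
  · obtain ⟨m₀, _, _, hneg₀⟩ := hnegpt 0
    refine ⟨m₀, fun n hn => ?_⟩
    have hmon : g.γ m₀ ≤ g.γ n := g.mono.monotone hn
    nlinarith

/-- non-membership in `VESet` propagates to a left neighbourhood of `δ`. -/
lemma not_mem_propagate (g : GoodSeq v δ) (φ : RatFunc K) (h : φ ∉ VESet v g.s) :
    ∃ β < δ, ∀ δ' : ℝ, β < δ' → δ' ≤ δ → ∀ g' : GoodSeq v δ', φ ∉ VESet v g'.s := by
  have hφ : φ ≠ 0 := by rintro rfl; exact h (zero_mem_VESet v g.s)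
  obtain ⟨A, B, β, hβ, hfor, hev⟩ := goodSeq_ratfunc_ev v g hφ
  obtain ⟨N₁, hall⟩ := eventually_neg_linear v g hev h
  have key : ∀ x : ℝ, g.γ N₁ ≤ x → x < δ → A + B * x < 0 := by
    intro x hx1 hx2
    obtain ⟨N', hN'⟩ := g.tend x hx2
    have h2 := hall (max N₁ N') (le_max_left _ _)
    have h1 := hall N₁ le_rfl
    have hx3 : x ≤ g.γ (max N₁ N') := le_of_lt (hN' (max N₁ N') (le_max_right _ _))
    rcases le_or_gt 0 B with hB | hB
    · nlinarith
    · nlinarith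
  refine ⟨max β (g.γ N₁), max_lt hβ (g.lt N₁), fun δ' h1 h2 g' hmem => ?_⟩
  have hcon : ∀ᶠ _n in (atTop : Filter ℕ), False := by
    filter_upwards [goodSeq_ev_gt v g' h1, hmem] with n hn h3
    have hβn : β < g'.γ n := lt_of_le_of_lt (le_max_left _ _) hn
    have hγN : g.γ N₁ ≤ g'.γ n := le_of_lt (lt_of_le_of_lt (le_max_right _ _) hn)
    have hlt : g'.γ n < δ := lt_of_lt_of_le (g'.lt n) h2
    rw [hfor (g'.s n) (g'.γ n) (g'.hv n) hβn hlt] at h3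
    have : (0:ℝ) ≤ A + B * g'.γ n := by exact_mod_cast h3
    have := key _ hγN hlt
    linarith
  obtain ⟨n, hn⟩ := hcon.exists
  exact hn

lemma finset_mem_propagate (g : GoodSeq v δ) (T : Finset (RatFunc K))
    (h : ∀ φ ∈ T, φ ∈ VESet v g.s) :
    ∃ β < δ, ∀ δ' : ℝ, β < δ' → δ' ≤ δ → ∀ g' : GoodSeq v δ', ∀ φ ∈ T, φ ∈ VESet v g'.s := by
  classical
  induction T using Finset.induction with
  | empty => exact ⟨δ-1, by linarith, fun _ _ _ _ φ hφ => absurd hφ (Finset.notMem_empty φ)⟩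
  | @insert a T' ha ih =>
    obtain ⟨β₁, hβ₁, h1⟩ := mem_propagate v g a (h a (Finset.mem_insert_self a T'))
    obtain ⟨β₂, hβ₂, h2⟩ := ih (fun φ hφ => h φ (Finset.mem_insert_of_mem hφ))
    refine ⟨max β₁ β₂, max_lt hβ₁ hβ₂, fun δ' hd1 hd2 g' φ hφ => ?_⟩
    rcases Finset.mem_insert.1 hφ with rfl | hφ'
    · exact h1 δ' (lt_of_le_of_lt (le_max_left _ _) hd1) hd2 g'
    · exact h2 δ' (lt_of_le_of_lt (le_max_right _ _) hd1) hd2 g' φ hφ'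

end Statement13Aux2


section Statement13Aux3

variable (v : AddValuation K (WithTop ℝ)) {δ : ℝ}

lemma eval_eq_neg (g : GoodSeq v δ) (a : RatFunc K) :
    ∀ᶠ n in atTop, RatFunc.eval (RingHom.id K) (g.s n) (-a)
      = - RatFunc.eval (RingHom.id K) (g.s n) a := by
  filter_upwards [goodSeq_denom_ne v g a] with n h3
  have hC : Polynomial.eval₂ (RingHom.id K) (g.s n) (RatFunc.denom (RatFunc.C (-1:K))) ≠ 0 := by
    rw [RatFunc.denom_C]
    simp
  have hca : RatFunc.C (-1 : K) * a = -a := by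
    rw [map_neg, map_one]
    ring
  rw [← hca, RatFunc.eval_mul (hx := hC) (hy := h3), RatFunc.eval_C]
  simp

lemma eval_ne_zero_of_coe (g : GoodSeq v δ) {a : RatFunc K} {n : ℕ} {r : ℝ}
    (h : v (RatFunc.eval (RingHom.id K) (g.s n) a) = (r : WithTop ℝ)) :
    RatFunc.eval (RingHom.id K) (g.s n) a ≠ 0 := by
  intro h0
  rw [h0, AddValuation.map_zero] at h
  exact WithTop.coe_ne_top h.symm

lemma eval_inv_ev (g : GoodSeq v δ) {a : RatFunc K} (hφ : a ≠ 0) :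
    ∀ᶠ n in atTop, RatFunc.eval (RingHom.id K) (g.s n) a⁻¹
      = (RatFunc.eval (RingHom.id K) (g.s n) a)⁻¹ := by
  filter_upwards [goodSeq_denom_ne v g a, goodSeq_denom_ne v g a⁻¹] with n h1 h2
  have hone : RatFunc.eval (RingHom.id K) (g.s n) (a * a⁻¹) = 1 := by
    rw [mul_inv_cancel₀ hφ, RatFunc.eval_one]
  rw [RatFunc.eval_mul (hx := h1) (hy := h2)] at hone
  exact eq_inv_of_mul_eq_one_right hone

/-- The valuation subring `V_E` associated with a good sequence. -/
def VESubring (g : GoodSeq v δ) : ValuationSubring (RatFunc K) where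
  carrier := VESet v g.s
  zero_mem' := zero_mem_VESet v g.s
  one_mem' := by
    refine Filter.Eventually.of_forall (fun n => ?_)
    rw [RatFunc.eval_one, AddValuation.map_one]
  mul_mem' := by
    intro a b ha hb
    have ha' : ∀ᶠ n in atTop, 0 ≤ v (RatFunc.eval (RingHom.id K) (g.s n) a) := ha
    have hb' : ∀ᶠ n in atTop, 0 ≤ v (RatFunc.eval (RingHom.id K) (g.s n) b) := hb
    filter_upwards [ha', hb', goodSeq_denom_ne v g a, goodSeq_denom_ne v g b] with n h1 h2 h3 h4
    show (0 : WithTop ℝ) ≤ v _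
    rw [RatFunc.eval_mul (hx := h3) (hy := h4), AddValuation.map_mul]
    exact add_nonneg h1 h2
  add_mem' := by
    intro a b ha hb
    have ha' : ∀ᶠ n in atTop, 0 ≤ v (RatFunc.eval (RingHom.id K) (g.s n) a) := ha
    have hb' : ∀ᶠ n in atTop, 0 ≤ v (RatFunc.eval (RingHom.id K) (g.s n) b) := hb
    filter_upwards [ha', hb', goodSeq_denom_ne v g a, goodSeq_denom_ne v g b] with n h1 h2 h3 h4
    show (0 : WithTop ℝ) ≤ v _
    rw [RatFunc.eval_add (hx := h3) (hy := h4)]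
    exact AddValuation.map_le_add v h1 h2
  neg_mem' := by
    intro a ha
    have ha' : ∀ᶠ n in atTop, 0 ≤ v (RatFunc.eval (RingHom.id K) (g.s n) a) := ha
    filter_upwards [ha', eval_eq_neg v g a] with n h1 h2
    show (0 : WithTop ℝ) ≤ v _
    rw [h2, AddValuation.map_neg]
    exact h1
  mem_or_inv_mem' := by
    intro a
    by_cases hφ : a = 0
    · left; rw [hφ]; exact zero_mem_VESet v g.s
    by_cases hc : ∀ᶠ n in atTop, 0 ≤ v (RatFunc.eval (RingHom.id K) (g.s n) a)
    · left; exact hc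
    · right
      obtain ⟨A, B, β, hβ, hfor, hev⟩ := goodSeq_ratfunc_ev v g hφ
      obtain ⟨N₁, hall⟩ := eventually_neg_linear v g hev hc
      show ∀ᶠ n in atTop, 0 ≤ v (RatFunc.eval (RingHom.id K) (g.s n) a⁻¹)
      filter_upwards [eval_inv_ev v g hφ, hev, eventually_ge_atTop N₁] with n h1 h2 h3
      rw [h1, AddValuation.map_inv, h2, ← WithTop.LinearOrderedAddCommGroup.coe_neg]
      have hneg := hall n h3
      exact_mod_cast (by linarith : (0:ℝ) ≤ -(A + B * g.γ n))

lemma coe_VESubring (g : GoodSeq v δ) : (VESubring v g : Set (RatFunc K)) = VESet v g.s := rfl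

lemma mem_VESubring (g : GoodSeq v δ) (φ : RatFunc K) :
    φ ∈ VESubring v g ↔ φ ∈ VESet v g.s := Iff.rfl

lemma VESubring_mem_VV (g : GoodSeq v δ) : VESubring v g ∈ VV v :=
  ⟨g.s, goodSeq_isPC v g, rfl⟩

lemma VESubring_mem_ZarSet (g : GoodSeq v δ) : VESubring v g ∈ ZarSet v := by
  intro x hx
  show ∀ᶠ n in atTop, 0 ≤ v (RatFunc.eval (RingHom.id K) (g.s n) (algebraMap K (RatFunc K) x))
  refine Filter.Eventually.of_forall (fun n => ?_)
  rw [RatFunc.algebraMap_eq_C, RatFunc.eval_C]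
  exact hx

/-- The separating element `a/X` and its values along a good sequence. -/
lemma phi_val {a : K} {δa : ℝ} (ha : v a = (δa : WithTop ℝ)) {δ' : ℝ} (g : GoodSeq v δ') :
    ∀ᶠ n in atTop, v (RatFunc.eval (RingHom.id K) (g.s n)
      (RatFunc.C a * (RatFunc.X)⁻¹)) = ((δa - g.γ n : ℝ) : WithTop ℝ) := by
  have haK : a ≠ 0 := ne_zero_of_v_coe v ha
  have hXev : ∀ n, v (RatFunc.eval (RingHom.id K) (g.s n) RatFunc.X)
      = ((g.γ n : ℝ) : WithTop ℝ) := by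
    intro n
    rw [RatFunc.eval_X]
    exact g.hv n
  have hCd : ∀ n, Polynomial.eval₂ (RingHom.id K) (g.s n) (RatFunc.denom (RatFunc.C a)) ≠ 0 := by
    intro n
    rw [RatFunc.denom_C]
    simp
  filter_upwards [eval_inv_ev v g (RatFunc.X_ne_zero (K := K)),
    goodSeq_denom_ne v g ((RatFunc.X : RatFunc K))⁻¹] with n h1 h2
  rw [RatFunc.eval_mul (hx := hCd n) (hy := h2), RatFunc.eval_C, h1, RatFunc.eval_X,
    AddValuation.map_mul, AddValuation.map_inv, RingHom.id_apply, ha, g.hv n,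
    ← WithTop.LinearOrderedAddCommGroup.coe_neg, ← WithTop.coe_add, WithTop.coe_inj]
  ring

end Statement13Aux3


section Statement13Aux4

variable (v : AddValuation K (WithTop ℝ))

/-- "Left inclusive along the family of `VESubring`s". -/
def LInc (U : Set (ValuationSubring (RatFunc K))) : Prop :=
  ∀ (δ : ℝ) (g : GoodSeq v δ), VESubring v g ∈ U →
    ∃ β < δ, ∀ (δ' : ℝ), β < δ' → δ' ≤ δ → ∀ g' : GoodSeq v δ', VESubring v g' ∈ U

lemma LInc_univ : LInc v Set.univ := fun δ _ _ => ⟨δ-1, by linarith, fun _ _ _ _ => trivial⟩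

lemma LInc_inter {U V : Set (ValuationSubring (RatFunc K))} (hU : LInc v U) (hV : LInc v V) :
    LInc v (U ∩ V) := by
  rintro δ g ⟨h1, h2⟩
  obtain ⟨β₁, hβ₁, k1⟩ := hU δ g h1
  obtain ⟨β₂, hβ₂, k2⟩ := hV δ g h2
  exact ⟨max β₁ β₂, max_lt hβ₁ hβ₂, fun δ' hd1 hd2 g' =>
    ⟨k1 δ' (lt_of_le_of_lt (le_max_left _ _) hd1) hd2 g',
     k2 δ' (lt_of_le_of_lt (le_max_right _ _) hd1) hd2 g'⟩⟩

lemma LInc_sUnion {S : Set (Set (ValuationSubring (RatFunc K)))} (h : ∀ U ∈ S, LInc v U) :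
    LInc v (⋃₀ S) := by
  rintro δ g ⟨U, hU, hg⟩
  obtain ⟨β, hβ, k⟩ := h U hU δ g hg
  exact ⟨β, hβ, fun δ' h1 h2 g' => ⟨U, hU, k δ' h1 h2 g'⟩⟩

lemma LInc_zar {U : Set (ValuationSubring (RatFunc K))} (hU : IsOpen[zarTop (RatFunc K)] U) :
    LInc v U := by
  have hU' : TopologicalSpace.GenerateOpen
      {U : Set (ValuationSubring (RatFunc K)) |
        ∃ φ : RatFunc K, U = {W : ValuationSubring (RatFunc K) | φ ∈ W}} U := hU
  clear hU
  induction hU' with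
  | basic u hu =>
    obtain ⟨φ, rfl⟩ := hu
    intro δ g hg
    obtain ⟨β, hβ, k⟩ := mem_propagate v g φ hg
    exact ⟨β, hβ, fun δ' h1 h2 g' => k δ' h1 h2 g'⟩
  | univ => exact LInc_univ v
  | inter u u' _ _ ih1 ih2 => exact LInc_inter v ih1 ih2
  | sUnion S _ ih => exact LInc_sUnion v ih

lemma LInc_cons {U : Set (ValuationSubring (RatFunc K))} (hU : IsOpen[consTop (RatFunc K)] U) :
    LInc v U := by
  have hU' : TopologicalSpace.GenerateOpen
      {U : Set (ValuationSubring (RatFunc K)) | ∃ T : Finset (RatFunc K),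
        U = {W : ValuationSubring (RatFunc K) | ∀ φ ∈ T, φ ∈ W} ∨
        U = {W : ValuationSubring (RatFunc K) | ∀ φ ∈ T, φ ∈ W}ᶜ} U := hU
  clear hU
  induction hU' with
  | basic u hu =>
    obtain ⟨T, hor⟩ := hu
    rcases hor with rfl | rfl
    · intro δ g hg
      obtain ⟨β, hβ, k⟩ := finset_mem_propagate v g T hg
      exact ⟨β, hβ, fun δ' h1 h2 g' => k δ' h1 h2 g'⟩
    · intro δ g hg
      have hex : ∃ φ ∈ T, φ ∉ VESet v g.s := by
        by_contra hcon
        push_neg at hcon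
        exact hg hcon
      obtain ⟨φ, hφT, hφn⟩ := hex
      obtain ⟨β, hβ, k⟩ := not_mem_propagate v g φ hφn
      exact ⟨β, hβ, fun δ' h1 h2 g' hall => k δ' h1 h2 g' (hall φ hφT)⟩
  | univ => exact LInc_univ v
  | inter u u' _ _ ih1 ih2 => exact LInc_inter v ih1 ih2
  | sUnion S _ ih => exact LInc_sUnion v ih

/-! metric helpers -/

lemma metrized_ball_open {X : Type*} {t : TopologicalSpace X} {d : X → X → ℝ}
    (h : MetrizedBy t d) (x : X) {ε : ℝ} (hε : 0 < ε) : IsOpen[t] {y | d x y < ε} := by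
  rw [h.2.2.2]
  exact TopologicalSpace.isOpen_generateFrom_of_mem ⟨x, ε, hε, rfl⟩

lemma metrized_exists_ball {X : Type*} {t : TopologicalSpace X} {d : X → X → ℝ}
    (h : MetrizedBy t d) {U : Set X} (hU : IsOpen[t] U) {x : X} (hx : x ∈ U) :
    ∃ ε > 0, ∀ y, d x y < ε → y ∈ U := by
  obtain ⟨hsymm, hzero, htri, hgen⟩ := h
  rw [hgen] at hU
  have hU' : TopologicalSpace.GenerateOpen
      {U : Set X | ∃ (x : X) (ε : ℝ), 0 < ε ∧ U = {y | d x y < ε}} U := hU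
  clear hU hgen
  induction hU' with
  | basic u hu =>
    obtain ⟨z, ε, hε, rfl⟩ := hu
    refine ⟨ε - d z x, by simpa using hx, fun y hy => ?_⟩
    have := htri z x y
    simp only [Set.mem_setOf_eq] at hx ⊢
    linarith
  | univ => exact ⟨1, by norm_num, fun _ _ => trivial⟩
  | inter u u' _ _ ih1 ih2 =>
    obtain ⟨ε₁, hε₁, k1⟩ := ih1 hx.1
    obtain ⟨ε₂, hε₂, k2⟩ := ih2 hx.2
    exact ⟨min ε₁ ε₂, lt_min hε₁ hε₂, fun y hy =>
      ⟨k1 y (lt_of_lt_of_le hy (min_le_left _ _)), k2 y (lt_of_lt_of_le hy (min_le_right _ _))⟩⟩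
  | sUnion S hS ih =>
    obtain ⟨u, hu, hxu⟩ := hx
    obtain ⟨ε, hε, k⟩ := ih u hu hxu
    exact ⟨ε, hε, fun y hy => ⟨u, hu, k y hy⟩⟩

/-- The abstract non-metrizability criterion. -/
lemma not_metrizable_abstract {X : Type*} (t : TopologicalSpace X) (p : ℝ → X)
    (I : Set ℝ) (hI : ¬ I.Countable)
    (hinc : ∀ U, IsOpen[t] U → ∀ δ : ℝ, p δ ∈ U → ∃ β < δ, ∀ δ', β < δ' → δ' ≤ δ → p δ' ∈ U)
    (hsep : ∀ δ ∈ I, ∃ U, IsOpen[t] U ∧ p δ ∈ U ∧ ∀ δ' ∈ I, δ < δ' → p δ' ∉ U) :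
    ¬ IsMetrizable t := by
  rintro ⟨d, hd⟩
  obtain ⟨hsymm, hzero, htri, hgen⟩ := id hd
  have hball : ∀ δ ∈ I, ∃ ε > 0, ∀ δ' ∈ I, δ < δ' → ¬ d (p δ) (p δ') < ε := by
    intro δ hδ
    obtain ⟨U, hUopen, hpU, hUsep⟩ := hsep δ hδ
    obtain ⟨ε, hε, hb⟩ := metrized_exists_ball hd hUopen hpU
    exact ⟨ε, hε, fun δ' hδ' hlt hdd => hUsep δ' hδ' hlt (hb _ hdd)⟩
  have hball' : ∀ δ : ℝ, ∃ ε : ℝ, δ ∈ I → (ε > 0 ∧ ∀ δ' ∈ I, δ < δ' → ¬ d (p δ) (p δ') < ε) := by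
    intro δ
    by_cases hδ : δ ∈ I
    · obtain ⟨ε, h1, h2⟩ := hball δ hδ
      exact ⟨ε, fun _ => ⟨h1, h2⟩⟩
    · exact ⟨1, fun h => absurd h hδ⟩
  choose ε hε using hball'
  have hcover : I ⊆ ⋃ n : ℕ, {δ ∈ I | 1/(n+1) < ε δ} := by
    intro δ hδ
    obtain ⟨n, hn⟩ := exists_nat_one_div_lt (hε δ hδ).1
    exact Set.mem_iUnion.2 ⟨n, hδ, hn⟩
  have hexn : ∃ n : ℕ, ¬ {δ ∈ I | 1/(n+1) < ε δ}.Countable := by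
    by_contra hall
    push_neg at hall
    exact hI (Set.Countable.mono hcover (Set.countable_iUnion hall))
  obtain ⟨n, hA⟩ := hexn
  set ε₀ : ℝ := 1/(n+1) with hε₀
  have hε₀pos : 0 < ε₀ := by positivity
  set A := {δ ∈ I | ε₀ < ε δ} with hA'
  have hq : ∀ δ : ℝ, ∃ q : ℚ, δ ∈ A → d (p δ) (p q) < ε₀/3 := by
    intro δ
    by_cases hδ : δ ∈ A
    · have hopen := metrized_ball_open hd (p δ) (show 0 < ε₀/3 by linarith)
      have hmem : p δ ∈ {y | d (p δ) y < ε₀/3} := by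
        have : d (p δ) (p δ) = 0 := (hzero (p δ) (p δ)).2 rfl
        simp only [Set.mem_setOf_eq, this]
        linarith
      obtain ⟨β, hβ, hk⟩ := hinc _ hopen δ hmem
      obtain ⟨q, hq1, hq2⟩ := exists_rat_btwn hβ
      exact ⟨q, fun _ => hk q hq1 (le_of_lt hq2)⟩
    · exact ⟨0, fun h => absurd h hδ⟩
  choose F hF using hq
  have hcore : ∀ δ₁ δ₂, δ₁ ∈ A → δ₂ ∈ A → F δ₁ = F δ₂ → δ₁ < δ₂ → False := by
    intro δ₁ δ₂ h₁ h₂ hFeq hlt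
    have hd12 : ¬ d (p δ₁) (p δ₂) < ε δ₁ := (hε δ₁ h₁.1).2 δ₂ h₂.1 hlt
    have t1 : d (p δ₁) (p (F δ₁ : ℚ)) < ε₀/3 := hF δ₁ h₁
    have t2 : d (p δ₂) (p (F δ₂ : ℚ)) < ε₀/3 := hF δ₂ h₂
    have t3 : d (p δ₁) (p δ₂) ≤ d (p δ₁) (p (F δ₁ : ℚ)) + d (p (F δ₁ : ℚ)) (p δ₂) :=
      htri _ _ _
    rw [hFeq, hsymm (p (F δ₂ : ℚ)) (p δ₂)] at t3
    rw [hFeq] at t1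
    have hgt : ε₀ < ε δ₁ := h₁.2
    apply hd12
    linarith
  have hInjOn : Set.InjOn F A := by
    intro δ₁ h₁ δ₂ h₂ hFeq
    by_contra hne
    rcases lt_or_gt_of_ne hne with hlt | hlt
    · exact hcore δ₁ δ₂ h₁ h₂ hFeq hlt
    · exact hcore δ₂ δ₁ h₂ h₁ hFeq.symm hlt
  exact hA (Set.MapsTo.countable_of_injOn (Set.mapsTo_univ F A) hInjOn Set.countable_univ)

end Statement13Aux4


section Statement13Aux5

variable (v : AddValuation K (WithTop ℝ))

lemma not_metrizable_general (hΓ : ¬ (valueGroup v).Countable)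
    (t : TopologicalSpace (ValuationSubring (RatFunc K)))
    (SS : Set (ValuationSubring (RatFunc K)))
    (hmem : ∀ (δ : ℝ) (g : GoodSeq v δ), VESubring v g ∈ SS)
    (hBopen : ∀ φ : RatFunc K, IsOpen[t] {W : ValuationSubring (RatFunc K) | φ ∈ W})
    (hLInc : ∀ U, IsOpen[t] U → LInc v U) :
    ¬ IsMetrizable (t.induced (Subtype.val : ↥SS → ValuationSubring (RatFunc K))) := by
  have hd := dense_valueGroup v hΓ
  have gseq : ∀ δ : ℝ, GoodSeq v δ := fun δ => (goodSeq_exists v hd δ).some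
  set p : ℝ → ↥SS := fun δ => ⟨VESubring v (gseq δ), hmem δ (gseq δ)⟩ with hp
  apply not_metrizable_abstract _ p (valueGroup v) hΓ
  · intro U hUopen δ hpU
    obtain ⟨V, hV, rfl⟩ := hUopen
    obtain ⟨β, hβ, k⟩ := hLInc V hV δ (gseq δ) hpU
    exact ⟨β, hβ, fun δ' h1 h2 => k δ' h1 h2 (gseq δ')⟩
  · intro δ hδ
    obtain ⟨a, ha⟩ := hδ
    refine ⟨Subtype.val ⁻¹' {W : ValuationSubring (RatFunc K) |
      RatFunc.C a * (RatFunc.X)⁻¹ ∈ W}, ⟨_, hBopen _, rfl⟩, ?_, ?_⟩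
    · show RatFunc.C a * (RatFunc.X)⁻¹ ∈ VESet v (gseq δ).s
      have hev := phi_val v ha (gseq δ)
      filter_upwards [hev] with m h
      show (0 : WithTop ℝ) ≤ v _
      rw [h]
      have := (gseq δ).lt m
      exact_mod_cast (by linarith : (0:ℝ) ≤ δ - (gseq δ).γ m)
    · intro δ' hδ' hlt hmem'
      have hmem'' : RatFunc.C a * (RatFunc.X)⁻¹ ∈ VESet v (gseq δ').s := hmem'
      have hev := phi_val v ha (gseq δ')
      have hgt := goodSeq_ev_gt v (gseq δ') hlt
      have hcon : ∀ᶠ _m in (atTop : Filter ℕ), False := by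
        filter_upwards [hev, hgt, hmem''] with m h1 h2 h3
        rw [h1] at h3
        have : (0:ℝ) ≤ δ - (gseq δ').γ m := by exact_mod_cast h3
        linarith
      obtain ⟨m, hm⟩ := hcon.exists
      exact hm

end Statement13Aux5


/-- If the value group `Γ_v` is uncountable, then `𝒱` (Zariski
topology) is not metrizable and `Zar(K(X)|V)` with the constructible topology is not
metrizable. -/
theorem statement13 (v : AddValuation K (WithTop ℝ)) (hv : IsRankOne v)
    (hΓ : ¬ (valueGroup v).Countable) :
    ¬ IsMetrizable (zarSub (VV v)) ∧ ¬ IsMetrizable (consSub (ZarSet v)) := by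
  constructor
  · have h := not_metrizable_general v hΓ (zarTop (RatFunc K)) (VV v)
      (fun δ g => VESubring_mem_VV v g)
      (fun φ => TopologicalSpace.isOpen_generateFrom_of_mem ⟨φ, rfl⟩)
      (fun U hU => LInc_zar v hU)
    exact h
  · have hBopen : ∀ φ : RatFunc K,
        IsOpen[consTop (RatFunc K)] {W : ValuationSubring (RatFunc K) | φ ∈ W} := by
      intro φ
      apply TopologicalSpace.isOpen_generateFrom_of_mem
      refine ⟨{φ}, Or.inl ?_⟩
      ext W
      simp
    have h := not_metrizable_general v hΓ (consTop (RatFunc K)) (ZarSet v)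
      (fun δ g => VESubring_mem_ZarSet v g)
      hBopen
      (fun U hU => LInc_cons v hU)
    exact h

end PaperPCZar
end
end

section
/- Let V be a valuation domain with uncountable residue field V/M. Then Zar(K(X)|V) endowed with the constructible topology is not metrizable. -/
open Filter Topology TopologicalSpace Set Polynomial

noncomputable section

namespace PaperPCZar

variable {K : Type*} [Field K]

section NM

variable (V : ValuationSubring K)

/-- membership in the composite valuation ring `W_a = {φ : φ(a) ∈ V}`. -/
def memW (a : K) (φ : RatFunc K) : Prop :=
  ∃ f g : Polynomial K, g.eval a ≠ 0 ∧
    φ * algebraMap (Polynomial K) (RatFunc K) g = algebraMap (Polynomial K) (RatFunc K) f ∧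
    f.eval a / g.eval a ∈ V

lemma memW_zero (a : K) : memW V a 0 :=
  ⟨0, 1, by simp, by simp, by simpa using V.zero_mem⟩

lemma memW_one (a : K) : memW V a 1 :=
  ⟨1, 1, by simp, by simp, by simpa using V.one_mem⟩

lemma memW_add {a : K} {φ ψ : RatFunc K} (h1 : memW V a φ) (h2 : memW V a ψ) :
    memW V a (φ + ψ) := by
  obtain ⟨f1, g1, hg1, he1, hv1⟩ := h1
  obtain ⟨f2, g2, hg2, he2, hv2⟩ := h2
  refine ⟨f1 * g2 + f2 * g1, g1 * g2, by simp [hg1, hg2], ?_, ?_⟩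
  · simp only [map_mul, map_add]
    linear_combination (algebraMap (Polynomial K) (RatFunc K) g2) * he1 +
      (algebraMap (Polynomial K) (RatFunc K) g1) * he2
  · have h : (f1 * g2 + f2 * g1).eval a / (g1 * g2).eval a
        = f1.eval a / g1.eval a + f2.eval a / g2.eval a := by
      simp only [Polynomial.eval_add, Polynomial.eval_mul]
      field_simp
    rw [h]; exact add_mem hv1 hv2

lemma memW_mul {a : K} {φ ψ : RatFunc K} (h1 : memW V a φ) (h2 : memW V a ψ) :
    memW V a (φ * ψ) := by
  obtain ⟨f1, g1, hg1, he1, hv1⟩ := h1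
  obtain ⟨f2, g2, hg2, he2, hv2⟩ := h2
  refine ⟨f1 * f2, g1 * g2, by simp [hg1, hg2], ?_, ?_⟩
  · simp only [map_mul]
    linear_combination (ψ * algebraMap (Polynomial K) (RatFunc K) g2) * he1 +
      (algebraMap (Polynomial K) (RatFunc K) f1) * he2
  · have h : (f1 * f2).eval a / (g1 * g2).eval a
        = (f1.eval a / g1.eval a) * (f2.eval a / g2.eval a) := by
      simp only [Polynomial.eval_mul]; rw [div_mul_div_comm]
    rw [h]; exact mul_mem hv1 hv2

lemma memW_neg {a : K} {φ : RatFunc K} (h1 : memW V a φ) : memW V a (-φ) := by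
  obtain ⟨f, g, hg, he, hv⟩ := h1
  refine ⟨-f, g, hg, ?_, ?_⟩
  · simp only [map_neg]; linear_combination -he
  · simpa [neg_div] using neg_mem hv

lemma rep_num_denom (φ : RatFunc K) :
    φ * algebraMap (Polynomial K) (RatFunc K) φ.denom
      = algebraMap (Polynomial K) (RatFunc K) φ.num := by
  exact ((div_eq_iff (RatFunc.algebraMap_ne_zero (RatFunc.denom_ne_zero φ))).mp
    (RatFunc.num_div_denom φ)).symm

lemma eval_not_both_zero (φ : RatFunc K) (a : K) :
    ¬ (φ.num.eval a = 0 ∧ φ.denom.eval a = 0) := by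
  rintro ⟨h1, h2⟩
  obtain ⟨u, w, huw⟩ := RatFunc.isCoprime_num_denom φ
  have := congrArg (Polynomial.eval a) huw
  simp [h1, h2] at this

lemma memW_or_inv (a : K) (φ : RatFunc K) : memW V a φ ∨ memW V a φ⁻¹ := by
  by_cases hφ : φ = 0
  · exact Or.inl (hφ ▸ memW_zero V a)
  have hrep := rep_num_denom φ
  by_cases hd : φ.denom.eval a = 0
  · have hn : φ.num.eval a ≠ 0 := fun h => eval_not_both_zero φ a ⟨h, hd⟩
    refine Or.inr ⟨φ.denom, φ.num, hn, ?_, by rw [hd, zero_div]; exact zero_mem _⟩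
    rw [← hrep, ← mul_assoc, inv_mul_cancel₀ hφ, one_mul]
  · by_cases hV : φ.num.eval a / φ.denom.eval a ∈ V
    · exact Or.inl ⟨φ.num, φ.denom, hd, hrep, hV⟩
    · rcases V.mem_or_inv_mem (φ.num.eval a / φ.denom.eval a) with h | h
      · exact absurd h hV
      rw [inv_div] at h
      have hn : φ.num.eval a ≠ 0 := by
        intro h0
        exact hV (by rw [h0, zero_div]; exact zero_mem _)
      refine Or.inr ⟨φ.denom, φ.num, hn, ?_, h⟩
      rw [← hrep, ← mul_assoc, inv_mul_cancel₀ hφ, one_mul]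

/-- The valuation ring `W_a`. -/
def Wv (a : K) : ValuationSubring (RatFunc K) where
  carrier := {φ | memW V a φ}
  zero_mem' := memW_zero V a
  one_mem' := memW_one V a
  add_mem' := memW_add V
  mul_mem' := memW_mul V
  neg_mem' := memW_neg V
  mem_or_inv_mem' := memW_or_inv V a

@[simp] lemma mem_Wv {a : K} {φ : RatFunc K} : φ ∈ Wv V a ↔ memW V a φ := Iff.rfl

lemma memW_iff {a : K} {φ : RatFunc K} (hφ : φ ≠ 0) :
    memW V a φ ↔ φ.denom.eval a ≠ 0 ∧ φ.num.eval a / φ.denom.eval a ∈ V := by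
  constructor
  · rintro ⟨f, g, hg, he, hv⟩
    have hcross : φ.num * g = f * φ.denom := by
      apply RatFunc.algebraMap_injective K
      simp only [map_mul]
      rw [← rep_num_denom φ, ← he]; ring
    have hevc : φ.num.eval a * g.eval a = f.eval a * φ.denom.eval a := by
      have := congrArg (Polynomial.eval a) hcross
      simpa using this
    have hd : φ.denom.eval a ≠ 0 := by
      intro h0
      apply eval_not_both_zero φ a
      refine ⟨?_, h0⟩
      have : φ.num.eval a * g.eval a = 0 := by rw [hevc, h0, mul_zero]
      exact (mul_eq_zero.mp this).resolve_right hg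
    refine ⟨hd, ?_⟩
    have : φ.num.eval a / φ.denom.eval a = f.eval a / g.eval a := by
      rw [div_eq_div_iff hd hg]; linear_combination hevc
    rw [this]; exact hv
  · rintro ⟨hd, hv⟩
    exact ⟨φ.num, φ.denom, hd, rep_num_denom φ, hv⟩

/-- choose an element of minimal valuation in a finite set -/
lemma exists_vmin (s : Finset K) (hs : s.Nonempty) (h0 : (0 : K) ∉ s) :
    ∃ m ∈ s, m ≠ 0 ∧ ∀ x ∈ s, x / m ∈ V := by
  classical
  induction s using Finset.induction_on with
  | empty => exact absurd hs (by simp)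
  | @insert b s hb ih =>
    have hbne : b ≠ 0 := fun h => h0 (by simp [h])
    rcases s.eq_empty_or_nonempty with rfl | hne
    · exact ⟨b, by simp, hbne, by simp [div_self hbne, V.one_mem]⟩
    · obtain ⟨m, hm, hmne, hmin⟩ := ih hne (fun h => h0 (Finset.mem_insert_of_mem h))
      rcases V.mem_or_inv_mem (b / m) with h | h
      · refine ⟨m, Finset.mem_insert_of_mem hm, hmne, ?_⟩
        intro x hx
        rcases Finset.mem_insert.mp hx with rfl | hx
        · exact h
        · exact hmin x hx
      · rw [inv_div] at h
        refine ⟨b, Finset.mem_insert_self b s, hbne, ?_⟩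
        intro x hx
        rcases Finset.mem_insert.mp hx with rfl | hx
        · simpa [div_self hbne] using V.one_mem
        · have : x / b = (x / m) * (m / b) := by
            field_simp
          rw [this]; exact mul_mem (hmin x hx) h

end NM

section NM2

variable (V : ValuationSubring K)
variable (a' : IsLocalRing.ResidueField ↥V → ↥V)
variable (ha : ∀ r, IsLocalRing.residue ↥V (a' r) = r)

lemma coe_inv_mem {t : ↥V} (h : IsUnit t) : ((t : K))⁻¹ ∈ V := by
  obtain ⟨u, rfl⟩ := h
  have h1 : ((u : ↥V) : K) * (((u⁻¹ : Vˣ) : ↥V) : K) = 1 := by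
    have h := congrArg (fun t : ↥V => (t : K)) u.mul_inv
    push_cast at h
    exact h
  have : ((u : ↥V) : K)⁻¹ = (((u⁻¹ : Vˣ) : ↥V) : K) :=
    (eq_inv_of_mul_eq_one_left (by rw [mul_comm] at h1; exact h1)).symm
  rw [this]
  exact SetLike.coe_mem _

include ha in
/-- Key lemma: off finitely many residues, `v(f(a_r))` is the "Gauss value" of `f`. -/
lemma key {f : Polynomial K} (hf : f ≠ 0) :
    ∃ c : K, c ≠ 0 ∧
      {r | ¬ (f.eval ↑(a' r) ≠ 0 ∧ f.eval ↑(a' r) / c ∈ V ∧ c / f.eval ↑(a' r) ∈ V)}.Finite := by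
  classical
  set s : Finset K := f.support.image f.coeff with hs
  have hsne : s.Nonempty := (Polynomial.support_nonempty.mpr hf).image _
  have h0s : (0 : K) ∉ s := by
    intro h
    obtain ⟨i, hi, hic⟩ := Finset.mem_image.mp h
    exact (Polynomial.mem_support_iff.mp hi) hic
  obtain ⟨c, hcs, hcne, hmin⟩ := exists_vmin V s hsne h0s
  have hc : ∀ i, f.coeff i / c ∈ V := by
    intro i
    by_cases hi : i ∈ f.support
    · exact hmin _ (Finset.mem_image_of_mem _ hi)
    · rw [Polynomial.notMem_support_iff.mp hi, zero_div]; exact zero_mem _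
  set H : Polynomial ↥V :=
    ∑ i ∈ f.support, Polynomial.C (⟨f.coeff i / c, hc i⟩ : ↥V) * Polynomial.X ^ i with hH
  have hHcoeff : ∀ j, H.coeff j =
      if j ∈ f.support then (⟨f.coeff j / c, hc j⟩ : ↥V) else 0 := by
    intro j
    rw [hH, Polynomial.finset_sum_coeff]
    simp only [Polynomial.coeff_C_mul, Polynomial.coeff_X_pow, mul_ite, mul_one, mul_zero]
    rw [Finset.sum_ite_eq f.support j]
  have heval : ∀ z : ↥V, ((H.eval z : ↥V) : K) = f.eval ↑z / c := by
    intro z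
    have h1 : ((H.eval z : ↥V) : K) = ∑ i ∈ f.support, (f.coeff i / c) * (z : K) ^ i := by
      rw [hH, Polynomial.eval_finset_sum]
      push_cast
      apply Finset.sum_congr rfl
      intro i _
      simp
    rw [h1]
    have h2 : f.eval (z : K) = ∑ i ∈ f.support, f.coeff i * (z : K) ^ i := by
      conv_lhs => rw [Polynomial.as_sum_support f]
      rw [Polynomial.eval_finset_sum]
      apply Finset.sum_congr rfl
      intro i _
      simp [Polynomial.eval_monomial]
    rw [h2, Finset.sum_div]
    apply Finset.sum_congr rfl
    intro i _
    ring
  set Hbar : Polynomial (IsLocalRing.ResidueField ↥V) :=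
    H.map (IsLocalRing.residue ↥V) with hHbar
  have hHbarne : Hbar ≠ 0 := by
    obtain ⟨i0, hi0, hci0⟩ := Finset.mem_image.mp hcs
    intro h
    have hco : Hbar.coeff i0 = 0 := by rw [h]; simp
    rw [hHbar, Polynomial.coeff_map, hHcoeff, if_pos hi0] at hco
    have hone : (⟨f.coeff i0 / c, hc i0⟩ : ↥V) = 1 := by
      ext; simp [hci0, div_self hcne]
    rw [hone, map_one] at hco
    exact one_ne_zero hco
  refine ⟨c, hcne, ?_⟩
  apply Set.Finite.subset (Polynomial.finite_setOf_isRoot hHbarne)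
  intro r hr
  simp only [Set.mem_setOf_eq] at hr ⊢
  by_contra hroot
  apply hr
  have hresid : IsLocalRing.residue ↥V (H.eval (a' r)) = Hbar.eval r := by
    conv_rhs => rw [← ha r]
    rw [hHbar, Polynomial.eval_map, Polynomial.eval₂_at_apply]
  have hunit : IsUnit (H.eval (a' r)) := by
    rw [← IsLocalRing.residue_ne_zero_iff_isUnit, hresid]
    exact hroot
  have hev := heval (a' r)
  have htne : ((H.eval (a' r) : ↥V) : K) ≠ 0 := by
    intro h
    have : (H.eval (a' r) : ↥V) = 0 := Subtype.ext h
    rw [this] at hunit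
    exact hunit.ne_zero rfl
  have hfne : f.eval ↑(a' r) ≠ 0 := by
    intro h
    rw [h, zero_div] at hev
    exact htne hev
  refine ⟨hfne, ?_, ?_⟩
  · rw [← hev]; exact SetLike.coe_mem _
  · have : c / f.eval ↑(a' r) = (f.eval ↑(a' r) / c)⁻¹ := by rw [inv_div]
    rw [this, ← hev]
    exact coe_inv_mem V hunit

end NM2

section NM3

variable (V : ValuationSubring K)
variable (a' : IsLocalRing.ResidueField ↥V → ↥V)
variable (ha : ∀ r, IsLocalRing.residue ↥V (a' r) = r)
variable (e : ℕ → IsLocalRing.ResidueField ↥V) (he : Function.Injective e)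

include ha in
lemma dichotomy (φ : RatFunc K) (hφ : φ ≠ 0) :
    ∃ Bad : Set (IsLocalRing.ResidueField ↥V), Bad.Finite ∧
      ((∀ r ∉ Bad, memW V ↑(a' r) φ) ∨
       (∀ r ∉ Bad, ¬ memW V ↑(a' r) φ ∧ memW V ↑(a' r) φ⁻¹)) := by
  obtain ⟨c1, hc1, hfin1⟩ := key V a' ha (RatFunc.num_ne_zero hφ)
  obtain ⟨c2, hc2, hfin2⟩ := key V a' ha (φ.denom_ne_zero)
  refine ⟨_, hfin1.union hfin2, ?_⟩
  have hP : ∀ r, r ∉ ({r | ¬ (φ.num.eval ↑(a' r) ≠ 0 ∧ φ.num.eval ↑(a' r) / c1 ∈ V ∧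
        c1 / φ.num.eval ↑(a' r) ∈ V)} ∪
      {r | ¬ (φ.denom.eval ↑(a' r) ≠ 0 ∧ φ.denom.eval ↑(a' r) / c2 ∈ V ∧
        c2 / φ.denom.eval ↑(a' r) ∈ V)}) →
      (φ.num.eval ↑(a' r) ≠ 0 ∧ φ.num.eval ↑(a' r) / c1 ∈ V ∧ c1 / φ.num.eval ↑(a' r) ∈ V) ∧
      (φ.denom.eval ↑(a' r) ≠ 0 ∧ φ.denom.eval ↑(a' r) / c2 ∈ V ∧
        c2 / φ.denom.eval ↑(a' r) ∈ V) := by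
    intro r hr
    rw [Set.mem_union, not_or] at hr
    constructor
    · by_contra h; exact hr.1 h
    · by_contra h; exact hr.2 h
  by_cases hQ : c1 / c2 ∈ V
  · left
    intro r hr
    obtain ⟨⟨hn0, hn1, hn2⟩, ⟨hd0, hd1, hd2⟩⟩ := hP r hr
    refine ⟨φ.num, φ.denom, hd0, rep_num_denom φ, ?_⟩
    have heq : φ.num.eval ↑(a' r) / φ.denom.eval ↑(a' r)
        = (φ.num.eval ↑(a' r) / c1) * ((c1 / c2) * (c2 / φ.denom.eval ↑(a' r))) := by
      field_simp
    rw [heq]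
    exact mul_mem hn1 (mul_mem hQ hd2)
  · have hQ' : c2 / c1 ∈ V := by
      rcases V.mem_or_inv_mem (c1 / c2) with h | h
      · exact absurd h hQ
      · rwa [inv_div] at h
    right
    intro r hr
    obtain ⟨⟨hn0, hn1, hn2⟩, ⟨hd0, hd1, hd2⟩⟩ := hP r hr
    constructor
    · intro hmem
      obtain ⟨-, hv⟩ := (memW_iff V hφ).mp hmem
      apply hQ
      have heq : c1 / c2 = (φ.num.eval ↑(a' r) / φ.denom.eval ↑(a' r))
          * ((c1 / φ.num.eval ↑(a' r)) * (φ.denom.eval ↑(a' r) / c2)) := by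
        field_simp
      rw [heq]
      exact mul_mem hv (mul_mem hn2 hd1)
    · refine ⟨φ.denom, φ.num, hn0, ?_, ?_⟩
      · rw [← rep_num_denom φ, ← mul_assoc, inv_mul_cancel₀ hφ, one_mul]
      · have heq : φ.denom.eval ↑(a' r) / φ.num.eval ↑(a' r)
            = (φ.denom.eval ↑(a' r) / c2) * ((c2 / c1) * (c1 / φ.num.eval ↑(a' r))) := by
          field_simp
        rw [heq]
        exact mul_mem hd1 (mul_mem hQ' hn2)

include he in
lemma ev_nb {Bad : Set (IsLocalRing.ResidueField ↥V)} (hB : Bad.Finite) :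
    ∀ᶠ n in atTop, e n ∉ Bad := by
  rw [← Nat.cofinite_eq_atTop]
  apply Filter.eventually_cofinite.mpr
  have h : {n | ¬ e n ∉ Bad} ⊆ e ⁻¹' Bad := by
    intro n hn; simpa using hn
  exact (Set.Finite.preimage he.injOn hB).subset h

/-- The limit point `p = V_E` for the pseudo-stationary sequence `a'(e n)`. -/
def pV : ValuationSubring (RatFunc K) where
  carrier := {φ | ∀ᶠ n in atTop, memW V ↑(a' (e n)) φ}
  zero_mem' := Eventually.of_forall fun _ => memW_zero V _
  one_mem' := Eventually.of_forall fun _ => memW_one V _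
  add_mem' h1 h2 := (h1.and h2).mono fun _ h => memW_add V h.1 h.2
  mul_mem' h1 h2 := (h1.and h2).mono fun _ h => memW_mul V h.1 h.2
  neg_mem' h1 := h1.mono fun _ h => memW_neg V h
  mem_or_inv_mem' := by
    intro φ
    by_cases hφ : φ = 0
    · subst hφ; exact Or.inl (Eventually.of_forall fun _ => memW_zero V _)
    obtain ⟨Bad, hB, hcase⟩ := dichotomy V a' ha φ hφ
    have hev := ev_nb V e he hB
    rcases hcase with h | h
    · exact Or.inl (hev.mono fun n hn => h _ hn)
    · exact Or.inr (hev.mono fun n hn => (h _ hn).2)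

lemma mem_pV {φ : RatFunc K} :
    φ ∈ pV V a' ha e he ↔ ∀ᶠ n in atTop, memW V ↑(a' (e n)) φ := Iff.rfl

lemma memW_iff_pV (φ : RatFunc K) :
    ∀ᶠ r in (cofinite : Filter (IsLocalRing.ResidueField ↥V)),
      (φ ∈ Wv V ↑(a' r) ↔ φ ∈ pV V a' ha e he) := by
  by_cases hφ : φ = 0
  · subst hφ
    exact Eventually.of_forall fun r =>
      iff_of_true (memW_zero V _) ((pV V a' ha e he).zero_mem)
  obtain ⟨Bad, hB, hcase⟩ := dichotomy V a' ha φ hφ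
  have hBc : ∀ᶠ r in cofinite, r ∉ Bad := hB.eventually_cofinite_notMem
  rcases hcase with h | h
  · have hp : φ ∈ pV V a' ha e he := (ev_nb V e he hB).mono fun n hn => h _ hn
    exact hBc.mono fun r hr => iff_of_true (h r hr) hp
  · have hp : φ ∉ pV V a' ha e he := by
      intro hmem
      obtain ⟨n, hm, hn⟩ := ((mem_pV V a' ha e he).mp hmem |>.and (ev_nb V e he hB)).exists
      exact (h _ hn).1 hm
    exact hBc.mono fun r hr => iff_of_false (h r hr).1 hp

lemma nbhd_cofinite {O : Set (ValuationSubring (RatFunc K))}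
    (hO : TopologicalSpace.GenerateOpen
      {U | ∃ T : Finset (RatFunc K),
        U = {W : ValuationSubring (RatFunc K) | ∀ φ ∈ T, φ ∈ W} ∨
        U = {W : ValuationSubring (RatFunc K) | ∀ φ ∈ T, φ ∈ W}ᶜ} O) :
    pV V a' ha e he ∈ O → ∀ᶠ r in cofinite, Wv V ↑(a' r) ∈ O := by
  induction hO with
  | basic U hU =>
    intro hp
    obtain ⟨T, hT⟩ := hU
    have hiff : ∀ᶠ r in cofinite,
        ∀ φ ∈ T, (φ ∈ Wv V ↑(a' r) ↔ φ ∈ pV V a' ha e he) :=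
      (eventually_all_finset T).mpr fun φ _ => memW_iff_pV V a' ha e he φ
    rcases hT with rfl | rfl
    · exact hiff.mono fun r hr φ hφT => (hr φ hφT).mpr (hp φ hφT)
    · exact hiff.mono fun r hr hall => hp fun φ hφT => (hr φ hφT).mp (hall φ hφT)
  | univ => exact fun _ => Eventually.of_forall fun _ => trivial
  | inter U1 U2 _ _ ih1 ih2 => exact fun hp => (ih1 hp.1).and (ih2 hp.2)
  | sUnion S _ ih =>
    rintro ⟨U, hUS, hpU⟩
    exact (ih U hUS hpU).mono fun r hr => ⟨U, hUS, hr⟩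

lemma memW_const {x : K} (hx : x ∈ V) (a : K) :
    memW V a (algebraMap K (RatFunc K) x) := by
  refine ⟨Polynomial.C x, 1, by simp, ?_, by simpa using hx⟩
  rw [map_one, mul_one, RatFunc.algebraMap_eq_C, RatFunc.algebraMap_C]

lemma not_memW_pole (x : K) :
    ¬ memW V x (algebraMap (Polynomial K) (RatFunc K) (Polynomial.X - Polynomial.C x))⁻¹ := by
  rintro ⟨f, g, hg, he', -⟩
  have hq : (Polynomial.X - Polynomial.C x) ≠ 0 := Polynomial.X_sub_C_ne_zero x
  have hq' : algebraMap (Polynomial K) (RatFunc K) (Polynomial.X - Polynomial.C x) ≠ 0 :=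
    RatFunc.algebraMap_ne_zero hq
  have heq2 : algebraMap (Polynomial K) (RatFunc K) (Polynomial.X - Polynomial.C x)
        * algebraMap (Polynomial K) (RatFunc K) f
      = algebraMap (Polynomial K) (RatFunc K) g := by
    rw [← he', ← mul_assoc, mul_inv_cancel₀ hq', one_mul]
  have hgf : g = (Polynomial.X - Polynomial.C x) * f :=
    (RatFunc.algebraMap_injective K (by rw [map_mul]; exact heq2)).symm
  apply hg
  rw [hgf]
  simp

include ha in
lemma inv_X_sub_mem_pV (r : IsLocalRing.ResidueField ↥V) :
    (algebraMap (Polynomial K) (RatFunc K)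
      (Polynomial.X - Polynomial.C (↑(a' r) : K)))⁻¹ ∈ pV V a' ha e he := by
  have hev : ∀ᶠ n in atTop, e n ≠ r := by
    rw [← Nat.cofinite_eq_atTop]
    apply Filter.eventually_cofinite.mpr
    have h : {n | ¬ e n ≠ r} ⊆ e ⁻¹' {r} := by intro n hn; simpa using hn
    exact ((Set.Finite.preimage he.injOn (Set.finite_singleton r)).subset h)
  refine hev.mono fun n hn => ?_
  set D : ↥V := a' (e n) - a' r with hD
  have hDu : IsUnit D := by
    rw [← IsLocalRing.residue_ne_zero_iff_isUnit, hD, map_sub, ha, ha]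
    exact sub_ne_zero.mpr hn
  have hDne : ((D : K)) ≠ 0 := fun h => hDu.ne_zero (Subtype.ext h)
  have hDval : (Polynomial.X - Polynomial.C ((a' r : K))).eval ↑(a' (e n)) = (D : K) := by
    simp [hD]
  refine ⟨1, Polynomial.X - Polynomial.C ((a' r : K)), ?_, ?_, ?_⟩
  · rw [hDval]; exact hDne
  · rw [map_one, inv_mul_cancel₀ (RatFunc.algebraMap_ne_zero (Polynomial.X_sub_C_ne_zero _))]
  · rw [Polynomial.eval_one, hDval, one_div]
    exact coe_inv_mem V hDu

end NM3

/-- If `V` is a valuation domain with uncountable residue field, then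
`Zar(K(X)|V)` with the constructible topology is not metrizable. -/
theorem statement15 (V : ValuationSubring K)
    (hres : ¬ Countable (IsLocalRing.ResidueField ↥V)) :
    ¬ IsMetrizable (consSub {W : ValuationSubring (RatFunc K) |
      ∀ x : K, x ∈ V → algebraMap K (RatFunc K) x ∈ W}) := by
  set S : Set (ValuationSubring (RatFunc K)) :=
    {W : ValuationSubring (RatFunc K) | ∀ x : K, x ∈ V → algebraMap K (RatFunc K) x ∈ W}
    with hS
  rintro ⟨d, hsymm, hzero, htri, htop⟩
  have hinf : Infinite (IsLocalRing.ResidueField ↥V) := by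
    by_contra h
    rw [not_infinite_iff_finite] at h
    exact hres h.to_countable
  let a' : IsLocalRing.ResidueField ↥V → ↥V :=
    Function.surjInv IsLocalRing.residue_surjective
  have ha : ∀ r, IsLocalRing.residue ↥V (a' r) = r := fun r =>
    Function.surjInv_eq IsLocalRing.residue_surjective r
  let e : ℕ → IsLocalRing.ResidueField ↥V := fun n => (Infinite.natEmbedding _) n
  have he : Function.Injective e := (Infinite.natEmbedding _).injective
  have hWS : ∀ r, Wv V ((a' r : K)) ∈ S := fun r x hx => memW_const V hx _
  have hpS : pV V a' ha e he ∈ S := fun x hx =>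
    Eventually.of_forall fun n => memW_const V hx _
  set P : ↥S := ⟨pV V a' ha e he, hpS⟩ with hP
  set Wf : IsLocalRing.ResidueField ↥V → ↥S := fun r => ⟨Wv V ((a' r : K)), hWS r⟩ with hWf
  have hne : ∀ r, d P (Wf r) ≠ 0 := by
    intro r h
    have h1 : P = Wf r := (hzero _ _).mp h
    have h2 : pV V a' ha e he = Wv V ((a' r : K)) := congrArg Subtype.val h1
    have h3 := inv_X_sub_mem_pV V a' ha e he r
    rw [h2] at h3
    exact not_memW_pole V ((a' r : K)) h3
  have hnonneg : ∀ x y : ↥S, 0 ≤ d x y := by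
    intro x y
    have h0 : d x x = 0 := (hzero x x).mpr rfl
    have h1 := htri x y x
    rw [h0, hsymm y x] at h1
    linarith
  have hball : ∀ ε : ℝ, 0 < ε → ∀ᶠ r in cofinite, d P (Wf r) < ε := by
    intro ε hε
    have hopen : IsOpen[consSub S] {y : ↥S | d P y < ε} := by
      rw [htop]
      exact TopologicalSpace.isOpen_generateFrom_of_mem ⟨P, ε, hε, rfl⟩
    obtain ⟨O, hO, hOeq⟩ := hopen
    have hO' : TopologicalSpace.GenerateOpen
      {U | ∃ T : Finset (RatFunc K),
        U = {W : ValuationSubring (RatFunc K) | ∀ φ ∈ T, φ ∈ W} ∨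
        U = {W : ValuationSubring (RatFunc K) | ∀ φ ∈ T, φ ∈ W}ᶜ} O := hO
    have hPO : pV V a' ha e he ∈ O := by
      have hPmem : P ∈ Subtype.val ⁻¹' O := by
        rw [hOeq]
        show d P P < ε
        rw [(hzero P P).mpr rfl]
        exact hε
      exact hPmem
    have hco := nbhd_cofinite V a' ha e he hO' hPO
    refine hco.mono fun r hr => ?_
    have : Wf r ∈ Subtype.val ⁻¹' O := hr
    rw [hOeq] at this
    exact this
  have hcount : Countable (IsLocalRing.ResidueField ↥V) := by
    have hsub : (Set.univ : Set (IsLocalRing.ResidueField ↥V)) ⊆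
        ⋃ n : ℕ, {r | ¬ d P (Wf r) < 1 / ((n : ℝ) + 1)} := by
      intro r _
      obtain ⟨n, hn⟩ := exists_nat_one_div_lt
        (lt_of_le_of_ne (hnonneg P (Wf r)) (Ne.symm (hne r)))
      exact Set.mem_iUnion.mpr ⟨n, not_lt.mpr hn.le⟩
    have hfin : ∀ n : ℕ, {r | ¬ d P (Wf r) < 1 / ((n : ℝ) + 1)}.Finite := fun n =>
      Filter.eventually_cofinite.mp (hball _ (by positivity))
    have huniv : (Set.univ : Set (IsLocalRing.ResidueField ↥V)).Countable :=
      Set.Countable.mono hsub (Set.countable_iUnion fun n => (hfin n).countable)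
    exact Set.countable_univ_iff.mp huniv
  exact hres hcount

end PaperPCZar
end
end

section
/- For every δ ∈ Γ_v, the set 𝒱_stat(•,δ) of valuation domains V_E arising from pseudo-stationary sequences of breadth δ is discrete with respect to both the Zariski and the constructible topology; and for every β ∈ K, the set 𝒱_stat(β,•) of valuation domains V_E arising from pseudo-stationary sequences having β as a pseudo-limit is discrete with respect to both the Zariski and the constructible topology. -/
open Filter Topology TopologicalSpace Set Polynomial

noncomputable section

namespace PaperPCZar

variable {K : Type*} [Field K]

lemma v_eq_top_iff (v : AddValuation K (WithTop ℝ)) {x : K} : v x = ⊤ ↔ x = 0 := by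
  constructor
  · intro h
    by_contra hx
    have h1 : v (x * x⁻¹) = v x + v x⁻¹ := v.map_mul _ _
    rw [mul_inv_cancel₀ hx, v.map_one, h, top_add] at h1
    exact (WithTop.zero_ne_top h1).elim
  · rintro rfl; exact v.map_zero

/-- minimal valuation of the coefficients -/
def vmin (v : AddValuation K (WithTop ℝ)) (p : Polynomial K) : WithTop ℝ :=
  p.support.inf fun k => v (p.coeff k)

lemma vmin_le (v : AddValuation K (WithTop ℝ)) (p : Polynomial K) (k : ℕ) :
    vmin v p ≤ v (p.coeff k) := by
  by_cases hk : k ∈ p.support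
  · exact Finset.inf_le hk
  · rw [Polynomial.notMem_support_iff.mp hk, v.map_zero]; exact le_top

lemma vmin_spec (v : AddValuation K (WithTop ℝ)) {p : Polynomial K} (hp : p ≠ 0) :
    ∃ j, p.coeff j ≠ 0 ∧ v (p.coeff j) = vmin v p := by
  obtain ⟨j, hj, hej⟩ := Finset.exists_mem_eq_inf p.support
    (Polynomial.support_nonempty.mpr hp) (fun k => v (p.coeff k))
  exact ⟨j, Polynomial.mem_support_iff.mp hj, hej.symm⟩

lemma eval_v_nonneg (v : AddValuation K (WithTop ℝ)) {p : Polynomial K}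
    (hp : ∀ k, 0 ≤ v (p.coeff k)) {x : K} (hx : 0 ≤ v x) : 0 ≤ v (p.eval x) := by
  rw [Polynomial.eval_eq_sum_range]
  refine v.map_le_sum fun i _ => ?_
  rw [v.map_mul, v.map_pow]
  exact add_nonneg (hp i) (nsmul_nonneg hx i)

lemma coeff_mul_nonneg (v : AddValuation K (WithTop ℝ)) {p q : Polynomial K}
    (hp : ∀ k, 0 ≤ v (p.coeff k)) (hq : ∀ k, 0 ≤ v (q.coeff k)) :
    ∀ k, 0 ≤ v ((p * q).coeff k) := by
  intro k
  rw [Polynomial.coeff_mul]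
  exact v.map_le_sum fun i _ => by rw [v.map_mul]; exact add_nonneg (hp _) (hq _)

lemma coeff_prod_nonneg (v : AddValuation K (WithTop ℝ)) {ι : Type*} (s : Finset ι)
    (F : ι → Polynomial K) (h : ∀ i ∈ s, ∀ k, 0 ≤ v ((F i).coeff k)) :
    ∀ k, 0 ≤ v ((∏ i ∈ s, F i).coeff k) := by
  classical
  induction s using Finset.induction with
  | empty =>
    intro k
    rw [Finset.prod_empty, Polynomial.coeff_one]
    by_cases hk : k = 0 <;> simp [hk, v.map_one, v.map_zero]
  | @insert a s hx ih =>
    rw [Finset.prod_insert hx]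
    exact coeff_mul_nonneg v (h _ (Finset.mem_insert_self _ _))
      (ih fun i hi k => h i (Finset.mem_insert_of_mem hi) k)


lemma basisDivisor_coeff_nonneg (v : AddValuation K (WithTop ℝ)) {x y : K}
    (hxy : v (x - y) = 0) (hy : 0 ≤ v y) :
    ∀ k, 0 ≤ v ((Lagrange.basisDivisor x y).coeff k) := by
  have h1 : ∀ k, 0 ≤ v ((Polynomial.C (x - y)⁻¹ : Polynomial K).coeff k) := by
    intro k
    rw [Polynomial.coeff_C]
    by_cases hk : k = 0
    · subst hk
      rw [if_pos rfl, v.map_inv, hxy]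
      simp
    · simp [hk, v.map_zero]
  have h2 : ∀ k, 0 ≤ v ((Polynomial.X - Polynomial.C y : Polynomial K).coeff k) := by
    intro k
    rw [Polynomial.coeff_sub, Polynomial.coeff_X, Polynomial.coeff_C]
    match k with
    | 0 => simpa [v.map_neg] using hy
    | 1 => simp [v.map_one]
    | (n+2) => simp [v.map_zero]
  intro k
  unfold Lagrange.basisDivisor
  exact coeff_mul_nonneg v h1 h2 k

lemma core_lemma (v : AddValuation K (WithTop ℝ)) {h : Polynomial K}
    (hco : ∀ k, 0 ≤ v (h.coeff k)) {t : Finset ℕ} {r : ℕ → K}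
    (hinj : Set.InjOn r t) (hcard : h.natDegree < t.card)
    (hr0 : ∀ i ∈ t, 0 ≤ v (r i))
    (hrpair : ∀ i ∈ t, ∀ j ∈ t, i ≠ j → v (r i - r j) = 0)
    (hev : ∀ i ∈ t, 0 < v (h.eval (r i))) : ∀ k, 0 < v (h.coeff k) := by
  classical
  have hdeg : h.degree < (t.card : WithBot ℕ) :=
    lt_of_le_of_lt Polynomial.degree_le_natDegree (by exact_mod_cast hcard)
  have heq := Lagrange.eq_interpolate (v := r) (s := t) hinj hdeg
  intro k
  have hcoeff : h.coeff k = ∑ i ∈ t, h.eval (r i) * (Lagrange.basis t r i).coeff k := by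
    conv_lhs => rw [heq]
    rw [Lagrange.interpolate_apply, Polynomial.finset_sum_coeff]
    refine Finset.sum_congr rfl fun i _ => ?_
    rw [Polynomial.coeff_C_mul]
  rw [hcoeff]
  refine v.map_lt_sum (by simp) fun i hi => ?_
  rw [v.map_mul]
  have hbasis : 0 ≤ v ((Lagrange.basis t r i).coeff k) := by
    unfold Lagrange.basis
    refine coeff_prod_nonneg v _ _ (fun j hj k' => ?_) k
    have hji : j ≠ i := Finset.ne_of_mem_erase hj
    exact basisDivisor_coeff_nonneg v
      (hrpair i hi j (Finset.mem_of_mem_erase hj) (Ne.symm hji))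
      (hr0 j (Finset.mem_of_mem_erase hj)) k'
  calc (0 : WithTop ℝ) < v (h.eval (r i)) := hev i hi
    _ = v (h.eval (r i)) + 0 := (add_zero _).symm
    _ ≤ v (h.eval (r i)) + v ((Lagrange.basis t r i).coeff k) := add_le_add_right hbasis _


lemma v_injective_seq (v : AddValuation K (WithTop ℝ)) {r : ℕ → K} {γ : WithTop ℝ}
    (hγ : γ ≠ ⊤) (hrd : ∀ n m, n ≠ m → v (r n - r m) = γ) : Function.Injective r := by
  intro n m hnm
  by_contra hne
  have h1 := hrd n m hne
  rw [hnm, sub_self, v.map_zero] at h1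
  exact hγ h1.symm

lemma eventual_eval_normalized (v : AddValuation K (WithTop ℝ)) (g : Polynomial K)
    {r : ℕ → K} (hrd : ∀ n m, n ≠ m → v (r n - r m) = 0) (hr0 : ∀ n, 0 ≤ v (r n)) :
    ∀ᶠ n in atTop, v (g.eval (r n)) = vmin v g := by
  by_cases hg : g = 0
  · subst hg
    refine Eventually.of_forall fun n => ?_
    rw [Polynomial.eval_zero, v.map_zero]
    unfold vmin
    simp
  obtain ⟨j, hj0, hjv⟩ := vmin_spec v hg
  have hbne : g.coeff j ≠ 0 := hj0
  have hvb_ne_top : v (g.coeff j) ≠ ⊤ := fun h => hbne ((v_eq_top_iff v).mp h)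
  obtain ⟨b0, hb0⟩ := WithTop.ne_top_iff_exists.mp hvb_ne_top
  set h : Polynomial K := Polynomial.C (g.coeff j)⁻¹ * g with hh
  have hco : ∀ k, 0 ≤ v (h.coeff k) := by
    intro k
    rw [hh, Polynomial.coeff_C_mul, v.map_mul, v.map_inv, ← hb0]
    have hle : (b0 : WithTop ℝ) ≤ v (g.coeff k) := by rw [hb0, hjv]; exact vmin_le v g k
    cases hck : v (g.coeff k) with
    | top => simp
    | coe ck =>
      rw [hck] at hle
      rw [← WithTop.LinearOrderedAddCommGroup.coe_neg, ← WithTop.coe_add, ← WithTop.coe_zero,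
        WithTop.coe_le_coe]
      have hbc : b0 ≤ ck := WithTop.coe_le_coe.mp hle
      linarith
  have hcoeffj : v (h.coeff j) = 0 := by
    rw [hh, Polynomial.coeff_C_mul, inv_mul_cancel₀ hbne, v.map_one]
  have hnn : ∀ n, 0 ≤ v (h.eval (r n)) := fun n => eval_v_nonneg v hco (hr0 n)
  have hrinj : Function.Injective r :=
    v_injective_seq v (by simp : (0 : WithTop ℝ) ≠ ⊤) hrd
  have hfin : {n | 0 < v (h.eval (r n))}.Finite := by
    by_contra hinf
    rw [← Set.Infinite] at hinf
    obtain ⟨t, hsub, hcard⟩ := hinf.exists_subset_card_eq (h.natDegree + 1)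
    have hcl := core_lemma v hco (t := t) hrinj.injOn
      (by rw [hcard]; exact Nat.lt_succ_self _)
      (fun i _ => hr0 i) (fun i _ j' _ hij => hrd i j' hij)
      (fun i hi => hsub hi)
    exact absurd (hcl j) (by rw [hcoeffj]; exact lt_irrefl 0)
  have hev : ∀ᶠ n in atTop, ¬ 0 < v (h.eval (r n)) := by
    rw [← Nat.cofinite_eq_atTop]
    exact hfin.compl_mem_cofinite
  filter_upwards [hev] with n hn
  have hval : v (h.eval (r n)) = 0 := le_antisymm (not_lt.mp hn) (hnn n)
  have hgeval : g.eval (r n) = g.coeff j * h.eval (r n) := by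
    rw [hh, Polynomial.eval_mul, Polynomial.eval_C, ← mul_assoc, mul_inv_cancel₀ hbne, one_mul]
  rw [hgeval, v.map_mul, hval, add_zero, hjv]


lemma peval₂_id (x : K) (p : Polynomial K) : p.eval₂ (RingHom.id K) x = p.eval x := by
  rw [Polynomial.eval₂_eq_eval_map, Polynomial.map_id]

lemma eventual_eval (v : AddValuation K (WithTop ℝ)) (f : Polynomial K) {a c : K} {δ₀ : ℝ}
    (hc : v c = (δ₀ : WithTop ℝ)) {x : ℕ → K}
    (hx : ∀ n m, n ≠ m → v (x n - x m) = (δ₀ : WithTop ℝ))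
    (hxa : ∀ n, (δ₀ : WithTop ℝ) ≤ v (x n - a)) :
    ∀ᶠ n in atTop, v (f.eval (x n)) =
      vmin v (f.comp (Polynomial.C c * Polynomial.X + Polynomial.C a)) := by
  have hcne : c ≠ 0 := by
    intro h0
    rw [h0, v.map_zero] at hc
    exact WithTop.coe_ne_top hc.symm
  set r : ℕ → K := fun n => (x n - a) / c with hrdef
  have hvdiv : ∀ y : K, v (y / c) + (δ₀ : WithTop ℝ) = v y := by
    intro y
    rw [← hc, ← v.map_mul, div_mul_cancel₀ _ hcne]
  have hrd : ∀ n m, n ≠ m → v (r n - r m) = 0 := by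
    intro n m hnm
    have heq : r n - r m = (x n - x m) / c := by
      rw [hrdef]
      field_simp
      ring
    rw [heq]
    refine WithTop.add_right_cancel (WithTop.coe_ne_top (a := δ₀)) ?_
    rw [hvdiv, hx n m hnm, zero_add]
  have hr0 : ∀ n, 0 ≤ v (r n) := by
    intro n
    refine (WithTop.add_le_add_iff_right (WithTop.coe_ne_top (a := δ₀))).mp ?_
    rw [hvdiv, zero_add]
    exact hxa n
  have hcomp : ∀ n, f.eval (x n) =
      (f.comp (Polynomial.C c * Polynomial.X + Polynomial.C a)).eval (r n) := by
    intro n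
    rw [Polynomial.eval_comp]
    congr 1
    simp only [Polynomial.eval_add, Polynomial.eval_mul, Polynomial.eval_C, Polynomial.eval_X]
    rw [hrdef]
    field_simp
    ring
  filter_upwards [eventual_eval_normalized v
    (f.comp (Polynomial.C c * Polynomial.X + Polynomial.C a)) hrd hr0] with n hn
  rw [hcomp n, hn]

lemma mem_VESet_iff_s19 (v : AddValuation K (WithTop ℝ)) {x : ℕ → K} {a c : K} {δ₀ : ℝ}
    (hc : v c = (δ₀ : WithTop ℝ))
    (hx : ∀ n m, n ≠ m → v (x n - x m) = (δ₀ : WithTop ℝ))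
    (hxa : ∀ n, (δ₀ : WithTop ℝ) ≤ v (x n - a)) (φ : RatFunc K) :
    φ ∈ VESet v x ↔
      vmin v (φ.denom.comp (Polynomial.C c * Polynomial.X + Polynomial.C a)) ≤
        vmin v (φ.num.comp (Polynomial.C c * Polynomial.X + Polynomial.C a)) := by
  have hnum := eventual_eval v φ.num hc hx hxa
  have hden := eventual_eval v φ.denom hc hx hxa
  have hxinj : Function.Injective x := v_injective_seq v (WithTop.coe_ne_top (a := δ₀)) hx
  have hdenne : ∀ᶠ n in atTop, φ.denom.eval (x n) ≠ 0 := by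
    rw [← Nat.cofinite_eq_atTop]
    have hroots : {y : K | φ.denom.IsRoot y}.Finite :=
      Polynomial.finite_setOf_isRoot (RatFunc.denom_ne_zero φ)
    have hfin : {n | φ.denom.eval (x n) = 0}.Finite :=
      Set.Finite.preimage hxinj.injOn hroots
    exact hfin.compl_mem_cofinite
  have hevalφ : ∀ n, RatFunc.eval (RingHom.id K) (x n) φ =
      φ.num.eval (x n) / φ.denom.eval (x n) := by
    intro n
    unfold RatFunc.eval
    rw [peval₂_id, peval₂_id]
  constructor
  · intro hφ
    obtain ⟨n, ⟨h0, hnum'⟩, hden', hne⟩ := (((hφ : ∀ᶠ n in atTop,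
      0 ≤ v (RatFunc.eval (RingHom.id K) (x n) φ)).and hnum).and (hden.and hdenne)).exists
    rw [hevalφ n] at h0
    have hkey : v (φ.num.eval (x n)) =
        v (φ.num.eval (x n) / φ.denom.eval (x n)) + v (φ.denom.eval (x n)) := by
      rw [← v.map_mul, div_mul_cancel₀ _ hne]
    rw [hnum', hden'] at hkey
    rw [hkey]
    exact le_add_of_nonneg_left h0
  · intro hle
    show ∀ᶠ n in atTop, 0 ≤ v (RatFunc.eval (RingHom.id K) (x n) φ)
    filter_upwards [hnum, hden, hdenne] with n h1 h2 h3
    rw [hevalφ n]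
    by_contra hneg
    rw [not_le] at hneg
    have hkey : v (φ.num.eval (x n)) =
        v (φ.num.eval (x n) / φ.denom.eval (x n)) + v (φ.denom.eval (x n)) := by
      rw [← v.map_mul, div_mul_cancel₀ _ h3]
    have hdnetop : v (φ.denom.eval (x n)) ≠ ⊤ := fun ht => h3 ((v_eq_top_iff v).mp ht)
    have hlt : v (φ.num.eval (x n)) < v (φ.denom.eval (x n)) := by
      rw [hkey]
      calc v (φ.num.eval (x n) / φ.denom.eval (x n)) + v (φ.denom.eval (x n))
          < 0 + v (φ.denom.eval (x n)) := WithTop.add_lt_add_right hdnetop hneg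
        _ = v (φ.denom.eval (x n)) := zero_add _
    rw [h1, h2] at hlt
    exact absurd hle (not_le.mpr hlt)

lemma VESet_eq (v : AddValuation K (WithTop ℝ)) {s t : ℕ → K} {δ₀ : ℝ}
    (hs : ∀ n m, n ≠ m → v (s n - s m) = (δ₀ : WithTop ℝ))
    (ht : ∀ n m, n ≠ m → v (t n - t m) = (δ₀ : WithTop ℝ))
    (hst : ∀ n m, (δ₀ : WithTop ℝ) ≤ v (t n - s m)) :
    VESet v s = VESet v t := by
  have hc : v (s 0 - s 1) = (δ₀ : WithTop ℝ) := hs 0 1 (by omega)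
  have hsa : ∀ n, (δ₀ : WithTop ℝ) ≤ v (s n - s 0) := by
    intro n
    rcases eq_or_ne n 0 with rfl | hn
    · rw [sub_self, v.map_zero]; exact le_top
    · rw [hs n 0 hn]
  have hta : ∀ n, (δ₀ : WithTop ℝ) ≤ v (t n - s 0) := fun n => hst n 0
  ext φ
  rw [mem_VESet_iff_s19 v hc hs hsa φ, mem_VESet_iff_s19 v hc ht hta φ]


lemma eventually_dist_eq (v : AddValuation K (WithTop ℝ)) {x : ℕ → K} {δ₀ : ℝ}
    (hx : ∀ n m, n ≠ m → v (x n - x m) = (δ₀ : WithTop ℝ)) {a : K}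
    (hxa : ∀ n, (δ₀ : WithTop ℝ) ≤ v (x n - a)) :
    ∀ᶠ n in atTop, v (x n - a) = (δ₀ : WithTop ℝ) := by
  have hsub : {n | (δ₀ : WithTop ℝ) < v (x n - a)}.Subsingleton := by
    intro n hn m hm
    by_contra hnm
    have hdec : x n - x m = (x n - a) + (a - x m) := by ring
    have hmin : min (v (x n - a)) (v (a - x m)) ≤ v (x n - x m) := by
      rw [hdec]; exact v.map_add _ _
    rw [v.map_sub_swap a (x m)] at hmin
    have hlt : (δ₀ : WithTop ℝ) < v (x n - x m) :=
      lt_of_lt_of_le (lt_min hn hm) hmin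
    exact absurd (hx n m hnm) (ne_of_gt hlt)
  have hfin : {n | (δ₀ : WithTop ℝ) < v (x n - a)}.Finite := hsub.finite
  have hev : ∀ᶠ n in atTop, ¬ (δ₀ : WithTop ℝ) < v (x n - a) := by
    rw [← Nat.cofinite_eq_atTop]
    exact hfin.compl_mem_cofinite
  filter_upwards [hev] with n hn
  exact le_antisymm (not_lt.mp hn) (hxa n)

lemma ratfunc_eval_div (p q : Polynomial K) (x : K) (hq : q.eval x ≠ 0) :
    RatFunc.eval (RingHom.id K) x
      (algebraMap (Polynomial K) (RatFunc K) p / algebraMap _ _ q) = p.eval x / q.eval x := by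
  have hq0 : q ≠ 0 := fun h => hq (by rw [h]; simp)
  set φ := algebraMap (Polynomial K) (RatFunc K) p / algebraMap _ _ q with hφ
  have hcross : φ.num * q = p * φ.denom := (RatFunc.num_mul_eq_mul_denom_iff hq0).mpr hφ
  have hdvd : φ.denom ∣ q := by rw [hφ]; exact RatFunc.denom_div_dvd p q
  have hdne : φ.denom.eval x ≠ 0 := by
    obtain ⟨u, hu⟩ := hdvd
    intro h0
    exact hq (by rw [hu, Polynomial.eval_mul, h0, zero_mul])
  unfold RatFunc.eval
  rw [peval₂_id, peval₂_id, div_eq_div_iff hdne hq]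
  have hev := congrArg (Polynomial.eval x) hcross
  rw [Polynomial.eval_mul, Polynomial.eval_mul] at hev
  exact hev

lemma ratfunc_eval_poly (p : Polynomial K) (x : K) :
    RatFunc.eval (RingHom.id K) x (algebraMap (Polynomial K) (RatFunc K) p) = p.eval x := by
  have h := ratfunc_eval_div p 1 x (by simp)
  simpa using h

lemma ratfunc_eval_inv_zero (ρ : Polynomial K) (x : K) (hρ : ρ ≠ 0) (hx : ρ.eval x = 0) :
    RatFunc.eval (RingHom.id K) x (algebraMap (Polynomial K) (RatFunc K) ρ)⁻¹ = 0 := by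
  have hinv : (algebraMap (Polynomial K) (RatFunc K) ρ)⁻¹ =
      algebraMap (Polynomial K) (RatFunc K) 1 / algebraMap _ _ ρ := by
    rw [map_one, one_div]
  have hcross : (algebraMap (Polynomial K) (RatFunc K) ρ)⁻¹.num * ρ =
      1 * (algebraMap (Polynomial K) (RatFunc K) ρ)⁻¹.denom :=
    (RatFunc.num_mul_eq_mul_denom_iff hρ).mpr hinv
  apply RatFunc.eval_eq_zero_of_eval₂_denom_eq_zero
  rw [peval₂_id]
  have hev := congrArg (Polynomial.eval x) hcross
  rw [Polynomial.eval_mul, hx, mul_zero, Polynomial.eval_mul, Polynomial.eval_one, one_mul] at hev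
  exact hev.symm

lemma no_top_stat (v : AddValuation K (WithTop ℝ)) (hv : IsRankOne v)
    (W : ValuationSubring (RatFunc K)) {β' : K}
    (hW : (W : Set (RatFunc K)) = VESet v (fun _ => β')) : False := by
  obtain ⟨z, hz0, hztop⟩ := hv
  obtain ⟨A, hA⟩ : ∃ A : K, v A < 0 := by
    rcases lt_trichotomy (v z) 0 with h | h | h
    · exact ⟨z, h⟩
    · exact absurd h hz0
    · refine ⟨z⁻¹, ?_⟩
      rw [v.map_inv]
      obtain ⟨z0, hz0'⟩ := WithTop.ne_top_iff_exists.mp hztop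
      rw [← hz0', ← WithTop.LinearOrderedAddCommGroup.coe_neg, ← WithTop.coe_zero,
        WithTop.coe_lt_coe]
      have hz0pos : (0 : ℝ) < z0 := by
        rw [← hz0'] at h
        exact_mod_cast h
      linarith
  set ρ : Polynomial K := Polynomial.X - Polynomial.C β' with hρdef
  have hρne : ρ ≠ 0 := Polynomial.X_sub_C_ne_zero β'
  have hρeval : ρ.eval β' = 0 := by rw [hρdef]; simp
  have hmemξ : algebraMap (Polynomial K) (RatFunc K) (Polynomial.C A * ρ) ∈ W := by
    rw [← SetLike.mem_coe, hW]
    refine Eventually.of_forall fun n => ?_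
    rw [ratfunc_eval_poly, Polynomial.eval_mul, hρeval, mul_zero, v.map_zero]
    exact le_top
  have hmemφ : (algebraMap (Polynomial K) (RatFunc K) ρ)⁻¹ ∈ W := by
    rw [← SetLike.mem_coe, hW]
    refine Eventually.of_forall fun n => ?_
    rw [ratfunc_eval_inv_zero ρ β' hρne hρeval, v.map_zero]
    exact le_top
  have hmul : algebraMap (Polynomial K) (RatFunc K) (Polynomial.C A * ρ) *
      (algebraMap (Polynomial K) (RatFunc K) ρ)⁻¹ =
      algebraMap (Polynomial K) (RatFunc K) (Polynomial.C A) := by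
    rw [map_mul, mul_assoc, mul_inv_cancel₀ (RatFunc.algebraMap_ne_zero hρne), mul_one]
  have hC : algebraMap (Polynomial K) (RatFunc K) (Polynomial.C A) ∈ W := by
    rw [← hmul]; exact mul_mem hmemξ hmemφ
  rw [← SetLike.mem_coe, hW] at hC
  obtain ⟨n, hn⟩ := hC.exists
  rw [ratfunc_eval_poly, Polynomial.eval_C] at hn
  exact absurd hA (not_lt.mpr hn)



lemma zarTop_pair_open {L : Type*} [Field L] (φ ψ : L) :
    IsOpen[zarTop L] {W : ValuationSubring L | φ ∈ W ∧ ψ ∈ W} := by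
  have h : {W : ValuationSubring L | φ ∈ W ∧ ψ ∈ W} =
      {W : ValuationSubring L | φ ∈ W} ∩ {W : ValuationSubring L | ψ ∈ W} := rfl
  rw [h]
  exact TopologicalSpace.GenerateOpen.inter _ _
    (TopologicalSpace.GenerateOpen.basic _ ⟨φ, rfl⟩)
    (TopologicalSpace.GenerateOpen.basic _ ⟨ψ, rfl⟩)

lemma consTop_pair_open {L : Type*} [Field L] (φ ψ : L) :
    IsOpen[consTop L] {W : ValuationSubring L | φ ∈ W ∧ ψ ∈ W} := by
  classical
  have h : {W : ValuationSubring L | φ ∈ W ∧ ψ ∈ W} =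
      {W : ValuationSubring L | ∀ χ ∈ ({φ, ψ} : Finset L), χ ∈ W} := by
    ext W
    constructor
    · rintro ⟨h1, h2⟩ χ hχ
      rcases Finset.mem_insert.mp hχ with rfl | hχ'
      · exact h1
      · rw [Finset.mem_singleton] at hχ'
        subst hχ'
        exact h2
    · intro h
      exact ⟨h φ (Finset.mem_insert_self _ _),
        h ψ (Finset.mem_insert_of_mem (Finset.mem_singleton_self _))⟩
  rw [h]
  exact TopologicalSpace.GenerateOpen.basic _ ⟨({φ, ψ} : Finset L), Or.inl rfl⟩

lemma discrete_of_pairs {L : Type*} [Field L] (τ : TopologicalSpace (ValuationSubring L))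
    (S : Set (ValuationSubring L))
    (hopen : ∀ φ ψ : L, IsOpen[τ] {W : ValuationSubring L | φ ∈ W ∧ ψ ∈ W})
    (hsep : ∀ W ∈ S, ∃ φ ψ : L, (φ ∈ W ∧ ψ ∈ W) ∧
      ∀ W' ∈ S, φ ∈ W' → ψ ∈ W' → W' = W) :
    @DiscreteTopology S (τ.induced Subtype.val) := by
  refine @DiscreteTopology.mk _ _ (eq_bot_of_singletons_open fun x => ?_)
  obtain ⟨φ, ψ, hmem, huniq⟩ := hsep x.1 x.2
  refine isOpen_induced_iff.mpr ⟨{W : ValuationSubring L | φ ∈ W ∧ ψ ∈ W}, hopen φ ψ, ?_⟩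
  ext y
  simp only [Set.mem_preimage, Set.mem_setOf_eq, Set.mem_singleton_iff]
  constructor
  · rintro ⟨h1, h2⟩
    exact Subtype.ext (huniq y.1 y.2 h1 h2)
  · rintro rfl
    exact hmem

lemma vmul_inv_nonneg (v : AddValuation K (WithTop ℝ)) {c : K} {δ₀ : ℝ}
    (hc : v c = (δ₀ : WithTop ℝ)) {y : K} (hy : (δ₀ : WithTop ℝ) ≤ v y) :
    0 ≤ v (c⁻¹ * y) := by
  calc (0 : WithTop ℝ) = ((-δ₀ + δ₀ : ℝ) : WithTop ℝ) := by norm_num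
    _ = ((-δ₀ : ℝ) : WithTop ℝ) + (δ₀ : WithTop ℝ) := by rw [WithTop.coe_add]
    _ ≤ ((-δ₀ : ℝ) : WithTop ℝ) + v y := add_le_add_right hy _
    _ = v (c⁻¹ * y) := by
        rw [v.map_mul, v.map_inv, hc, WithTop.LinearOrderedAddCommGroup.coe_neg]

lemma le_of_vmul_inv_nonneg (v : AddValuation K (WithTop ℝ)) {c : K} {δ₀ : ℝ}
    (hc : v c = (δ₀ : WithTop ℝ)) {y : K} (h : 0 ≤ v (c⁻¹ * y)) :
    (δ₀ : WithTop ℝ) ≤ v y := by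
  have hcne : c ≠ 0 := by
    intro h0
    rw [h0, v.map_zero] at hc
    exact WithTop.coe_ne_top hc.symm
  calc (δ₀ : WithTop ℝ) = (δ₀ : WithTop ℝ) + 0 := (add_zero _).symm
    _ ≤ (δ₀ : WithTop ℝ) + v (c⁻¹ * y) := add_le_add_right h _
    _ = v y := by rw [← hc, ← v.map_mul, ← mul_assoc, mul_inv_cancel₀ hcne, one_mul]

/-- For every `δ ∈ Γ_v` the space `𝒱_stat(•,δ)` is discrete, and for
every `β ∈ K` the space `𝒱_stat(β,•)` is discrete, with respect to both the Zariski and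
the constructible topology. -/
theorem statement19 (v : AddValuation K (WithTop ℝ)) (hv : IsRankOne v) :
    (∀ δ : ℝ, δ ∈ valueGroup v →
      @DiscreteTopology _ (zarSub (VVstatδ v (δ : WithTop ℝ))) ∧
      @DiscreteTopology _ (consSub (VVstatδ v (δ : WithTop ℝ)))) ∧
    (∀ β : K,
      @DiscreteTopology _ (zarSub (VVstatβ v β)) ∧
      @DiscreteTopology _ (consSub (VVstatβ v β))) := by
  classical
  constructor
  · -- `𝒱_stat(•,δ)` is discrete
    intro δ hδ
    obtain ⟨c, hc⟩ := hδ
    have hsep : ∀ W ∈ VVstatδ v (δ : WithTop ℝ), ∃ φ ψ : RatFunc K, (φ ∈ W ∧ ψ ∈ W) ∧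
        ∀ W' ∈ VVstatδ v (δ : WithTop ℝ), φ ∈ W' → ψ ∈ W' → W' = W := by
      rintro W ⟨s, hs, hW⟩
      refine ⟨algebraMap (Polynomial K) (RatFunc K)
          (Polynomial.C c⁻¹ * (Polynomial.X - Polynomial.C (s 0))),
        algebraMap (Polynomial K) (RatFunc K)
          (Polynomial.C c⁻¹ * (Polynomial.X - Polynomial.C (s 0))), ⟨?_, ?_⟩, ?_⟩
      · rw [← SetLike.mem_coe, hW]
        show ∀ᶠ n in atTop, 0 ≤ v (RatFunc.eval (RingHom.id K) (s n) _)
        filter_upwards [eventually_ne_atTop 0] with n hn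
        rw [ratfunc_eval_poly]
        simp only [Polynomial.eval_mul, Polynomial.eval_C, Polynomial.eval_sub,
          Polynomial.eval_X]
        exact vmul_inv_nonneg v hc (le_of_eq (hs n 0 hn).symm)
      · rw [← SetLike.mem_coe, hW]
        show ∀ᶠ n in atTop, 0 ≤ v (RatFunc.eval (RingHom.id K) (s n) _)
        filter_upwards [eventually_ne_atTop 0] with n hn
        rw [ratfunc_eval_poly]
        simp only [Polynomial.eval_mul, Polynomial.eval_C, Polynomial.eval_sub,
          Polynomial.eval_X]
        exact vmul_inv_nonneg v hc (le_of_eq (hs n 0 hn).symm)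
      · rintro W' ⟨t, ht, hW'⟩ hφ' -
        rw [← SetLike.mem_coe, hW'] at hφ'
        obtain ⟨n₀, hn₀⟩ := (hφ' : ∀ᶠ n in atTop,
          0 ≤ v (RatFunc.eval (RingHom.id K) (t n) _)).exists
        rw [ratfunc_eval_poly] at hn₀
        simp only [Polynomial.eval_mul, Polynomial.eval_C, Polynomial.eval_sub,
          Polynomial.eval_X] at hn₀
        have hball : (δ : WithTop ℝ) ≤ v (t n₀ - s 0) := le_of_vmul_inv_nonneg v hc hn₀
        have hst : ∀ n m, (δ : WithTop ℝ) ≤ v (t n - s m) := by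
          intro n m
          have hdec : t n - s m = (t n - t n₀) + ((t n₀ - s 0) + (s 0 - s m)) := by ring
          rw [hdec]
          refine v.map_le_add ?_ (v.map_le_add hball ?_)
          · rcases eq_or_ne n n₀ with rfl | hne
            · rw [sub_self, v.map_zero]; exact le_top
            · exact le_of_eq (ht n n₀ hne).symm
          · rcases eq_or_ne (0 : ℕ) m with rfl | hne
            · rw [sub_self, v.map_zero]; exact le_top
            · exact le_of_eq (hs 0 m hne).symm
        have hVE : VESet v s = VESet v t := VESet_eq v hs ht hst
        exact SetLike.coe_injective (hW'.trans (hVE.symm.trans hW.symm))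
    exact ⟨discrete_of_pairs (zarTop (RatFunc K)) _ (fun φ ψ => zarTop_pair_open φ ψ) hsep,
      discrete_of_pairs (consTop (RatFunc K)) _ (fun φ ψ => consTop_pair_open φ ψ) hsep⟩
  · -- `𝒱_stat(β,•)` is discrete
    intro β
    have hsep : ∀ W ∈ VVstatβ v β, ∃ φ ψ : RatFunc K, (φ ∈ W ∧ ψ ∈ W) ∧
        ∀ W' ∈ VVstatβ v β, φ ∈ W' → ψ ∈ W' → W' = W := by
      rintro W ⟨s, δ', hs, hβ, hW⟩
      cases δ' with
      | top =>
        exfalso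
        have hsc : s = fun _ => s 0 := by
          funext n
          rcases eq_or_ne n 0 with rfl | hn
          · rfl
          · exact sub_eq_zero.mp ((v_eq_top_iff v).mp (hs n 0 hn))
        rw [hsc] at hW
        exact no_top_stat v hv W hW
      | coe δ₀ =>
        have hs' : ∀ n m, n ≠ m → v (s n - s m) = (δ₀ : WithTop ℝ) := hs
        have hβ' : ∀ n, (δ₀ : WithTop ℝ) ≤ v (β - s n) := hβ
        have hc : v (s 0 - s 1) = (δ₀ : WithTop ℝ) := hs' 0 1 (by omega)
        set c : K := s 0 - s 1 with hcdef
        have hsβ : ∀ n, (δ₀ : WithTop ℝ) ≤ v (s n - β) := fun n => by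
          rw [v.map_sub_swap]; exact hβ' n
        refine ⟨algebraMap (Polynomial K) (RatFunc K)
            (Polynomial.C c⁻¹ * (Polynomial.X - Polynomial.C β)),
          algebraMap (Polynomial K) (RatFunc K) (Polynomial.C c) /
            algebraMap (Polynomial K) (RatFunc K) (Polynomial.X - Polynomial.C β),
          ⟨?_, ?_⟩, ?_⟩
        · rw [← SetLike.mem_coe, hW]
          refine Eventually.of_forall fun n => ?_
          rw [ratfunc_eval_poly]
          simp only [Polynomial.eval_mul, Polynomial.eval_C, Polynomial.eval_sub,
            Polynomial.eval_X]
          exact vmul_inv_nonneg v hc (hsβ n)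
        · rw [← SetLike.mem_coe, hW]
          filter_upwards [eventually_dist_eq v hs' hsβ] with n hn
          have hyne : s n - β ≠ 0 := by
            intro h0
            rw [h0, v.map_zero] at hn
            exact WithTop.coe_ne_top hn.symm
          have hevalne : (Polynomial.X - Polynomial.C β).eval (s n) ≠ 0 := by
            simpa using hyne
          rw [ratfunc_eval_div _ _ _ hevalne]
          simp only [Polynomial.eval_C, Polynomial.eval_sub, Polynomial.eval_X]
          have hkey : v (c / (s n - β)) + (δ₀ : WithTop ℝ) = (δ₀ : WithTop ℝ) := by
            conv_rhs => rw [← hc]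
            rw [← hn, ← v.map_mul, div_mul_cancel₀ _ hyne]
          have hzero : v (c / (s n - β)) = 0 :=
            WithTop.add_right_cancel (WithTop.coe_ne_top (a := δ₀))
              (hkey.trans (zero_add (δ₀ : WithTop ℝ)).symm)
          rw [hzero]
        · rintro W' ⟨t, δ'', ht, hβ'', hW'⟩ hφ' hψ'
          cases δ'' with
          | top =>
            exfalso
            have htc : t = fun _ => t 0 := by
              funext n
              rcases eq_or_ne n 0 with rfl | hn
              · rfl
              · exact sub_eq_zero.mp ((v_eq_top_iff v).mp (ht n 0 hn))
            rw [htc] at hW'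
            exact no_top_stat v hv W' hW'
          | coe δ₁ =>
            have ht' : ∀ n m, n ≠ m → v (t n - t m) = (δ₁ : WithTop ℝ) := ht
            have htβ0 : ∀ n, (δ₁ : WithTop ℝ) ≤ v (t n - β) := fun n => by
              rw [v.map_sub_swap]; exact hβ'' n
            have hteq : ∀ᶠ n in atTop, v (t n - β) = (δ₁ : WithTop ℝ) :=
              eventually_dist_eq v ht' htβ0
            rw [← SetLike.mem_coe, hW'] at hφ' hψ'
            -- δ₀ ≤ δ₁
            obtain ⟨n, h1, h2⟩ := ((hφ' : ∀ᶠ n in atTop,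
              0 ≤ v (RatFunc.eval (RingHom.id K) (t n) _)).and hteq).exists
            rw [ratfunc_eval_poly] at h1
            simp only [Polynomial.eval_mul, Polynomial.eval_C, Polynomial.eval_sub,
              Polynomial.eval_X] at h1
            have h01 : (δ₀ : ℝ) ≤ δ₁ := by
              have := le_of_vmul_inv_nonneg v hc h1
              rw [h2] at this
              exact_mod_cast this
            -- δ₁ ≤ δ₀
            obtain ⟨n', h1', h2'⟩ := ((hψ' : ∀ᶠ n in atTop,
              0 ≤ v (RatFunc.eval (RingHom.id K) (t n) _)).and hteq).exists
            have hyne' : t n' - β ≠ 0 := by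
              intro h0
              rw [h0, v.map_zero] at h2'
              exact WithTop.coe_ne_top h2'.symm
            have hevalne' : (Polynomial.X - Polynomial.C β).eval (t n') ≠ 0 := by
              simpa using hyne'
            rw [ratfunc_eval_div _ _ _ hevalne'] at h1'
            simp only [Polynomial.eval_C, Polynomial.eval_sub, Polynomial.eval_X] at h1'
            have hkey' : v (c / (t n' - β)) + (δ₁ : WithTop ℝ) = (δ₀ : WithTop ℝ) := by
              conv_rhs => rw [← hc]
              rw [← h2', ← v.map_mul, div_mul_cancel₀ _ hyne']
            have h10 : (δ₁ : ℝ) ≤ δ₀ := by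
              have hle : (δ₁ : WithTop ℝ) ≤ (δ₀ : WithTop ℝ) := by
                calc (δ₁ : WithTop ℝ) = 0 + (δ₁ : WithTop ℝ) := (zero_add _).symm
                  _ ≤ v (c / (t n' - β)) + (δ₁ : WithTop ℝ) := add_le_add_left h1' _
                  _ = (δ₀ : WithTop ℝ) := hkey'
              exact_mod_cast hle
            have hδeq : δ₁ = δ₀ := le_antisymm h10 h01
            subst hδeq
            have hst : ∀ n m, (δ₁ : WithTop ℝ) ≤ v (t n - s m) := by
              intro n m
              have hdec : t n - s m = (t n - β) + (β - s m) := by ring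
              rw [hdec]
              exact v.map_le_add (htβ0 n) (hβ' m)
            have hVE : VESet v s = VESet v t := VESet_eq v hs' ht' hst
            exact SetLike.coe_injective (hW'.trans (hVE.symm.trans hW.symm))
    exact ⟨discrete_of_pairs (zarTop (RatFunc K)) _ (fun φ ψ => zarTop_pair_open φ ψ) hsep,
      discrete_of_pairs (consTop (RatFunc K)) _ (fun φ ψ => consTop_pair_open φ ψ) hsep⟩

end PaperPCZar
end
end
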